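/- arXiv:1908.08182 — 5 statements merged into one kernel-verified Lean document; each statement's English description precedes it below -/
import Mathlib

section
/- In the setting of the reduced equation t ∂w/∂t = λ(t,x)w + a₁(t,x,w,∂w/∂x)w + b₁(t,x,w,∂w/∂x)(∂w/∂x), suppose Re λ(t,x) < −2a on [0,σ*] × D_{R₀*} for some a > 0, |a₁(t,x,w,q)| ≤ A₀μ(t) + A₁|w| + A₂|q| and |b₁(t,x,w,q)| ≤ B₀μ(t) + B₁|w| + B₂|q| on Ω*, and let w ∈ 𝒳₁((0,σ₀) × D_{R₀}) be a solution satisfying limsup_{R→+0} [ lim_{σ→+0} ( (1/R²) sup_{(0,σ)×D_R} |w(t,x)| ) ] = 0. Set q = ∂w/∂x, a(t,x) = a₁(t,x,w(t,x),q(t,x)), b(t,x) = b₁(t,x,w(t,x),q(t,x)), γ(t,x) = ∂λ/∂x + ∂a/∂x, ℓ(t,x) = ∂b/∂x, and for 0 < σ < σ₀, 0 < R < R₀ set A = sup_{(0,σ)×D_R}|a|, Γ = sup_{(0,σ)×D_R}|γ|, L = sup_{(0,σ)×D_R}|ℓ|, r₁ = sup_{(0,σ)×D_R}|w|, r₂ =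 sup_{(0,σ)×D_R}|q|. Then by taking σ > 0 and R > 0 sufficiently small one obtains A + L < a and B₀φ(σ) + (B₁/a + B₂Γ/a²)r₁ + (B₂/a)r₂ < R/2, where φ(t) = ∫₀^t μ(s)/s ds. -/
open Set MeasureTheory Complex

noncomputable section

/-- The open disc of radius `r` centred at `0` in `ℂ`. -/
def Disc (r : ℝ) : Set ℂ := {z : ℂ | ‖z‖ < r}

/-- `μ` is a weight function on `(0, T₀]`: positive, continuous, increasing,
with `∫₀^{T₀} μ(s)/s ds < ∞`. -/
def IsWeight (T₀ : ℝ) (μ : ℝ → ℝ) : Prop :=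
  (∀ t ∈ Set.Ioc (0:ℝ) T₀, 0 < μ t) ∧
    ContinuousOn μ (Set.Ioc 0 T₀) ∧
    MonotoneOn μ (Set.Ioc 0 T₀) ∧
    MeasureTheory.IntegrableOn (fun s => μ s / s) (Set.Ioc 0 T₀)

/-- `φ(t) = ∫₀ᵗ μ(s)/s ds`. -/
def phi (μ : ℝ → ℝ) (t : ℝ) : ℝ := ∫ s in Set.Ioc (0:ℝ) t, μ s / s

-- helper lemmas section (to be inserted)
open Metric Filter in
/-- Cauchy-type estimate via the Schwarz lemma. -/
lemma cauchy_est {f : ℂ → ℂ} {r M : ℝ} (hr : 0 < r)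
    (hf : DifferentiableOn ℂ f (Metric.ball 0 r))
    (hM : ∀ z ∈ Metric.ball (0:ℂ) r, ‖f z‖ ≤ M)
    {x : ℂ} (hx : x ∈ Metric.ball (0:ℂ) (r/2)) :
    ‖deriv f x‖ ≤ 4 * M / r := by
  have hxr : ‖x‖ < r/2 := by simpa [Metric.mem_ball, dist_zero_right] using hx
  have hsub : Metric.ball x (r/2) ⊆ Metric.ball (0:ℂ) r := by
    apply Metric.ball_subset_ball'
    rw [dist_zero_right]
    linarith
  have key : ∀ η > (0:ℝ), ‖deriv f x‖ ≤ (2*M + η)/(r/2) := by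
    intro η hη
    have hMx : ‖f x‖ ≤ M := hM x (hsub (Metric.mem_ball_self (by linarith)))
    refine Complex.norm_deriv_le_div_of_mapsTo_ball (hf.mono hsub) ?_ (by linarith)
    intro z hz
    have h1 : ‖f z‖ ≤ M := hM z (hsub hz)
    simp only [Metric.mem_closedBall, dist_eq_norm]; apply le_of_lt
    calc ‖f z - f x‖ ≤ ‖f z‖ + ‖f x‖ := norm_sub_le _ _
      _ < 2*M + η := by linarith
  have h4 : ∀ η' > (0:ℝ), ‖deriv f x‖ ≤ 4*M/r + η' := by
    intro η' hη'
    have := key (η' * r / 2) (by positivity)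
    calc ‖deriv f x‖ ≤ (2*M + η'*r/2)/(r/2) := this
      _ = 4*M/r + η' := by field_simp; ring
  linarith [le_of_forall_pos_le_add h4]

lemma weight_ae_nonneg {σs : ℝ} {μ : ℝ → ℝ} (hpos : ∀ t ∈ Set.Ioc (0:ℝ) σs, 0 < μ t)
    {τ : ℝ} (hτ : τ ≤ σs) :
    0 ≤ᵐ[MeasureTheory.volume.restrict (Ioc (0:ℝ) τ)] fun s => μ s / s := by
  filter_upwards [MeasureTheory.ae_restrict_mem measurableSet_Ioc] with s hs
  have h1 := hpos s ⟨hs.1, hs.2.trans hτ⟩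
  have := hs.1
  positivity

lemma phi_mono' {σs : ℝ} {μ : ℝ → ℝ} (hμ : IsWeight σs μ) {σ τ : ℝ}
    (hστ : σ ≤ τ) (hτ : τ ≤ σs) : phi μ σ ≤ phi μ τ := by
  obtain ⟨hpos, -, -, hint⟩ := hμ
  exact setIntegral_mono_set (hint.mono_set (Ioc_subset_Ioc le_rfl hτ))
    (weight_ae_nonneg hpos hτ)
    (HasSubset.Subset.eventuallyLE (Ioc_subset_Ioc le_rfl hστ))

lemma mu_le_two_phi {σs : ℝ} {μ : ℝ → ℝ} (hμ : IsWeight σs μ) {σ : ℝ}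
    (hσ : 0 < σ) (hσs : σ ≤ σs) : μ (σ/2) ≤ 2 * phi μ σ := by
  obtain ⟨hpos, -, hmono, hint⟩ := hμ
  have h2 : (σ/2) ∈ Ioc (0:ℝ) σs := ⟨by linarith, by linarith⟩
  have key : μ (σ/2) / 2 ≤ ∫ s in Ioc (σ/2) σ, μ s / s := by
    have hci : IntegrableOn (fun _ : ℝ => μ (σ/2) / σ) (Ioc (σ/2) σ) :=
      integrableOn_const measure_Ioc_lt_top.ne
    have hgi : IntegrableOn (fun s => μ s / s) (Ioc (σ/2) σ) :=
      hint.mono_set (Ioc_subset_Ioc (by linarith) hσs)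
    have hle := setIntegral_mono_on hci hgi measurableSet_Ioc (fun s hs => by
      have hs1 : s ∈ Ioc (0:ℝ) σs := ⟨lt_trans (by linarith) hs.1, hs.2.trans hσs⟩
      have hμs : μ (σ/2) ≤ μ s := hmono h2 hs1 (le_of_lt hs.1)
      exact div_le_div₀ (le_of_lt (hpos s hs1)) hμs
        (lt_trans (by linarith) hs.1) hs.2)
    rw [setIntegral_const, Real.volume_real_Ioc_of_le (by linarith),
      smul_eq_mul] at hle
    have heq : (σ - σ/2) * (μ (σ/2)/σ) = μ (σ/2)/2 := by field_simp; ring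
    linarith
  have key2 : (∫ s in Ioc (σ/2) σ, μ s / s) ≤ phi μ σ :=
    setIntegral_mono_set (hint.mono_set (Ioc_subset_Ioc le_rfl hσs))
      (weight_ae_nonneg hpos hσs)
      (HasSubset.Subset.eventuallyLE (Ioc_subset_Ioc (by linarith) le_rfl))
  unfold phi at *
  linarith

open Filter in
lemma phi_small {σs : ℝ} {μ : ℝ → ℝ} (hσs : 0 < σs) (hμ : IsWeight σs μ) :
    ∀ δ > (0:ℝ), ∃ σ₂ ∈ Ioc (0:ℝ) σs, phi μ σ₂ < δ := by
  intro δ hδ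
  have hint := hμ.2.2.2
  have hpos := hμ.1
  set S : ℕ → Set ℝ := fun n => Ioc (σs/(n+1)) σs with hS
  have hmeas : ∀ n, MeasurableSet (S n) := fun n => measurableSet_Ioc
  have hmono : Monotone S := by
    intro n m hnm
    refine Ioc_subset_Ioc ?_ le_rfl
    apply div_le_div_of_nonneg_left (le_of_lt hσs) (by positivity)
    have : (n:ℝ) ≤ m := by exact_mod_cast hnm
    linarith
  have hUnion : (⋃ n, S n) = Ioc 0 σs := by
    ext z
    simp only [mem_iUnion, hS, mem_Ioc]
    constructor
    · rintro ⟨n, h1, h2⟩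
      exact ⟨lt_trans (by positivity) h1, h2⟩
    · rintro ⟨h1, h2⟩
      obtain ⟨n, hn⟩ := exists_nat_gt (σs / z)
      refine ⟨n, ?_, h2⟩
      rw [div_lt_iff₀ (by positivity)] at hn
      rw [div_lt_iff₀ (by positivity)]
      nlinarith [hn, h1]
  have htend := tendsto_setIntegral_of_monotone hmeas hmono
    (by rw [hUnion]; exact hint)
  rw [hUnion] at htend
  have hev : ∀ᶠ n : ℕ in atTop, phi μ σs - δ < ∫ s in S n, μ s / s := by
    apply htend.eventually_const_lt
    unfold phi; linarith
  obtain ⟨n, hn⟩ := hev.exists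
  refine ⟨σs/(n+1), ⟨by positivity, by
    rw [div_le_iff₀ (by positivity)]; nlinarith⟩, ?_⟩
  have hsplit : phi μ σs = phi μ (σs/(n+1)) + ∫ s in S n, μ s / s := by
    unfold phi
    rw [← setIntegral_union]
    · rw [Ioc_union_Ioc_eq_Ioc (le_of_lt (by positivity)) (by
        rw [div_le_iff₀ (by positivity)]; nlinarith)]
    · exact Set.Ioc_disjoint_Ioc_of_le le_rfl
    · exact measurableSet_Ioc
    · exact hint.mono_set (Ioc_subset_Ioc le_rfl (by
        rw [div_le_iff₀ (by positivity)]; nlinarith))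
    · exact hint.mono_set (Ioc_subset_Ioc (le_of_lt (by positivity)) le_rfl)
  linarith

set_option maxHeartbeats 1000000 in
/-- Lemma 2.6 : in the setting of the reduced equation, taking `σ > 0` and `R > 0`
sufficiently small one obtains `A + L < a` and
`B₀ φ(σ) + (B₁/a + B₂Γ/a²) r₁ + (B₂/a) r₂ < R/2`, where
`A, Γ, L, r₁, r₂` are the suprema of `|a(t,x)|, |γ(t,x)|, |ℓ(t,x)|, |w(t,x)|, |q(t,x)|`
over `(0,σ) × D_R` (expressed below as least upper bounds that satisfy the
required inequalities), with
`q = ∂w/∂x`, `a(t,x) = a₁(t,x,w,q)`, `b(t,x) = b₁(t,x,w,q)`,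
`γ = ∂λ/∂x + ∂a/∂x`, `ℓ = ∂b/∂x`. -/
theorem choice_of_small_sigma_R
    (σs Rs ρs : ℝ) (hσs : 0 < σs) (hRs : 0 < Rs) (hρs : 0 < ρs)
    (μ : ℝ → ℝ) (hμ : IsWeight σs μ)
    (lam : ℝ → ℂ → ℂ)
    (hlamc : ContinuousOn (fun p : ℝ × ℂ => lam p.1 p.2) (Set.Icc 0 σs ×ˢ Disc Rs))
    (hlamh : ∀ t ∈ Set.Icc (0:ℝ) σs, DifferentiableOn ℂ (lam t) (Disc Rs))
    (a : ℝ) (ha : 0 < a)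
    (hlam2a : ∀ t ∈ Set.Icc (0:ℝ) σs, ∀ x ∈ Disc Rs, (lam t x).re < -(2 * a))
    (a₁ b₁ : ℝ → ℂ → ℂ → ℂ → ℂ)
    (ha₁c : ContinuousOn (fun p : ℝ × ℂ × ℂ × ℂ => a₁ p.1 p.2.1 p.2.2.1 p.2.2.2)
      (Set.Icc 0 σs ×ˢ Disc Rs ×ˢ Disc ρs ×ˢ Disc ρs))
    (hb₁c : ContinuousOn (fun p : ℝ × ℂ × ℂ × ℂ => b₁ p.1 p.2.1 p.2.2.1 p.2.2.2)
      (Set.Icc 0 σs ×ˢ Disc Rs ×ˢ Disc ρs ×ˢ Disc ρs))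
    (ha₁h : ∀ t ∈ Set.Icc (0:ℝ) σs,
      DifferentiableOn ℂ (fun p : ℂ × ℂ × ℂ => a₁ t p.1 p.2.1 p.2.2)
        (Disc Rs ×ˢ Disc ρs ×ˢ Disc ρs))
    (hb₁h : ∀ t ∈ Set.Icc (0:ℝ) σs,
      DifferentiableOn ℂ (fun p : ℂ × ℂ × ℂ => b₁ t p.1 p.2.1 p.2.2)
        (Disc Rs ×ˢ Disc ρs ×ˢ Disc ρs))
    (A₀ A₁ A₂ B₀ B₁ B₂ : ℝ)
    (hA₀ : 0 < A₀) (hA₁ : 0 < A₁) (hA₂ : 0 < A₂)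
    (hB₀ : 0 < B₀) (hB₁ : 0 < B₁) (hB₂ : 0 < B₂)
    (ha₁bd : ∀ t ∈ Set.Ioc (0:ℝ) σs, ∀ x ∈ Disc Rs, ∀ w' ∈ Disc ρs, ∀ q' ∈ Disc ρs,
      ‖a₁ t x w' q'‖ ≤ A₀ * μ t + A₁ * ‖w'‖ + A₂ * ‖q'‖)
    (hb₁bd : ∀ t ∈ Set.Ioc (0:ℝ) σs, ∀ x ∈ Disc Rs, ∀ w' ∈ Disc ρs, ∀ q' ∈ Disc ρs,
      ‖b₁ t x w' q'‖ ≤ B₀ * μ t + B₁ * ‖w'‖ + B₂ * ‖q'‖)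
    -- `w` : a solution in `𝒳₁((0,σ₀) × D_{R₀})` of the reduced equation
    (σ₀ R₀ : ℝ) (hσ₀ : 0 < σ₀) (hσ₀s : σ₀ < σs) (hR₀ : 0 < R₀) (hR₀s : R₀ < Rs)
    (w : ℝ → ℂ → ℂ)
    (hwC1 : ContDiffOn ℝ 1 (fun p : ℝ × ℂ => w p.1 p.2) (Set.Ioo 0 σ₀ ×ˢ Disc R₀))
    (hwH : ∀ t ∈ Set.Ioo (0:ℝ) σ₀, DifferentiableOn ℂ (w t) (Disc R₀))
    (hwsol : ∀ t ∈ Set.Ioo (0:ℝ) σ₀, ∀ x ∈ Disc R₀,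
      (t : ℂ) * deriv (fun s : ℝ => w s x) t =
        lam t x * w t x + a₁ t x (w t x) (deriv (w t) x) * w t x +
          b₁ t x (w t x) (deriv (w t) x) * deriv (w t) x)
    -- condition (2.7)
    (hsmall : ∀ ε > 0, ∃ ρ' > 0, ∀ ρ ∈ Set.Ioo (0:ℝ) ρ', ∃ σ > 0,
      ∀ t ∈ Set.Ioo (0:ℝ) σ, ∀ x ∈ Disc ρ, ‖w t x‖ ≤ ε * ρ ^ 2) :
    ∃ σ ∈ Set.Ioo (0:ℝ) σ₀, ∃ R ∈ Set.Ioo (0:ℝ) R₀, ∃ A Γ L r₁ r₂ : ℝ,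
      (∀ t ∈ Set.Ioo (0:ℝ) σ, ∀ x ∈ Disc R,
        ‖a₁ t x (w t x) (deriv (w t) x)‖ ≤ A ∧
        ‖deriv (fun z : ℂ => lam t z) x +
            deriv (fun z : ℂ => a₁ t z (w t z) (deriv (w t) z)) x‖ ≤ Γ ∧
        ‖deriv (fun z : ℂ => b₁ t z (w t z) (deriv (w t) z)) x‖ ≤ L ∧
        ‖w t x‖ ≤ r₁ ∧ ‖deriv (w t) x‖ ≤ r₂) ∧
      A + L < a ∧
      B₀ * phi μ σ + (B₁ / a + B₂ * Γ / a ^ 2) * r₁ + (B₂ / a) * r₂ < R / 2 := by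
  -- identification of discs with metric balls
  have hD : ∀ r : ℝ, Disc r = Metric.ball (0:ℂ) r := fun r => by
    ext z; simp [Disc, Metric.mem_ball, dist_zero_right]
  have hmemD : ∀ (r : ℝ) (z : ℂ), z ∈ Disc r ↔ ‖z‖ < r := fun r z => Iff.rfl
  -- Step 1 : a bound on ∂λ/∂x on the half-disc of radius R₀/2
  obtain ⟨M, hM⟩ := (isCompact_Icc.prod (isCompact_closedBall (0:ℂ) R₀)).exists_bound_of_continuousOn
    (hlamc.mono (by
      intro p hp
      refine ⟨hp.1, ?_⟩
      rw [hmemD]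
      have : dist p.2 0 ≤ R₀ := hp.2
      rw [dist_zero_right] at this
      linarith))
  have hM0 : 0 ≤ M := le_trans (norm_nonneg _) (hM (0, 0) ⟨⟨le_rfl, hσs.le⟩, by simp [hR₀.le]⟩)
  obtain ⟨CL, hCLdef⟩ : ∃ x : ℝ, x = 4 * M / R₀ := ⟨_, rfl⟩
  have hCL0 : 0 ≤ CL := by rw [hCLdef]; positivity
  have hClam : ∀ t ∈ Set.Icc (0:ℝ) σs, ∀ x ∈ Metric.ball (0:ℂ) (R₀/2),
      ‖deriv (lam t) x‖ ≤ CL := by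
    intro t ht x hx
    rw [hCLdef]
    refine cauchy_est hR₀ ((hlamh t ht).mono ?_) (fun z hz => hM (t, z) ⟨ht, Metric.ball_subset_closedBall hz⟩) hx
    intro z hz
    rw [hmemD]
    have : dist z 0 < R₀ := hz
    rw [dist_zero_right] at this
    linarith
  -- Step 2 : choice of ε
  obtain ⟨Γv, hΓdef⟩ : ∃ x : ℝ, x = CL + 1 := ⟨_, rfl⟩
  have hΓ0 : 0 < Γv := by rw [hΓdef]; linarith
  obtain ⟨K₂, hK₂def⟩ : ∃ x : ℝ, x = B₁ / a + B₂ * Γv / a ^ 2 := ⟨_, rfl⟩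
  have hK₂ : 0 < K₂ := by
    rw [hK₂def]
    have h2 : 0 ≤ B₂ * Γv / a ^ 2 := div_nonneg (mul_nonneg hB₂.le hΓ0.le) (by positivity)
    have h1 : 0 < B₁ / a := div_pos hB₁ ha
    linarith
  obtain ⟨S, hSdef⟩ : ∃ x : ℝ, x = A₁ + 4*A₂ + 8*(B₁ + 4*B₂) := ⟨_, rfl⟩
  have hS : 0 < S := by rw [hSdef]; positivity
  obtain ⟨T, hTdef⟩ : ∃ x : ℝ, x = K₂ + 4 * B₂ / a := ⟨_, rfl⟩
  have hT : 0 < T := by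
    rw [hTdef]
    have : 0 < 4 * B₂ / a := by positivity
    linarith
  obtain ⟨ε, hεdef⟩ : ∃ x : ℝ, x = min 1 (min (a/(4*S+1)) (min (1/(16*(A₁+4*A₂)+1)) (1/(32*T+1)))) := ⟨_, rfl⟩
  have hε : 0 < ε := by
    rw [hεdef]
    refine lt_min one_pos (lt_min (div_pos ha (by linarith)) (lt_min
      (div_pos one_pos (by linarith)) (div_pos one_pos (by linarith))))
  have hε1 : ε ≤ 1 := by rw [hεdef]; exact min_le_left _ _
  have hεa : ε * (4*S+1) ≤ a := by
    have h : ε ≤ a/(4*S+1) := by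
      rw [hεdef]
      exact le_trans (min_le_right 1 _) (min_le_left _ _)
    rwa [le_div_iff₀ (by positivity)] at h
  have hεb : ε * (16*(A₁+4*A₂)+1) ≤ 1 := by
    have h : ε ≤ 1/(16*(A₁+4*A₂)+1) := by
      rw [hεdef]
      exact le_trans (min_le_right 1 _) (le_trans (min_le_right _ _) (min_le_left _ _))
    rwa [le_div_iff₀ (by positivity)] at h
  have hεc : ε * (32*T+1) ≤ 1 := by
    have h : ε ≤ 1/(32*T+1) := by
      rw [hεdef]
      exact le_trans (min_le_right 1 _) (le_trans (min_le_right _ _) (min_le_right _ _))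
    rwa [le_div_iff₀ (by positivity)] at h
  -- Step 3 : choice of ρ via (2.7)
  obtain ⟨ρ', hρ'pos, hprop⟩ := hsmall ε hε
  have hmin : 0 < min ρ' (min R₀ (min 1 (ρs/8))) :=
    lt_min hρ'pos (lt_min hR₀ (lt_min one_pos (by positivity)))
  obtain ⟨ρ, hρdef⟩ : ∃ x : ℝ, x = min ρ' (min R₀ (min 1 (ρs/8))) / 2 := ⟨_, rfl⟩
  have hρ : 0 < ρ := by rw [hρdef]; positivity
  have hρρ' : ρ < ρ' := by
    have := min_le_left ρ' (min R₀ (min 1 (ρs/8)))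
    rw [hρdef]; linarith
  have hρR₀ : 2 * ρ ≤ R₀ := by
    have := le_trans (min_le_right ρ' _) (min_le_left R₀ (min 1 (ρs/8)))
    rw [hρdef]; linarith
  have hρ1 : 2 * ρ ≤ 1 := by
    have := le_trans (le_trans (min_le_right ρ' _) (min_le_right R₀ _)) (min_le_left 1 (ρs/8))
    rw [hρdef]; linarith
  have hρρs : 16 * ρ ≤ ρs := by
    have := le_trans (le_trans (min_le_right ρ' _) (min_le_right R₀ _)) (min_le_right 1 (ρs/8))
    rw [hρdef]; linarith
  obtain ⟨σ₁, hσ₁, hw⟩ := hprop ρ ⟨hρ, hρρ'⟩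
  -- Step 4 : choice of σ
  obtain ⟨X, hXdef⟩ : ∃ x : ℝ, x = A₀ + 8 * B₀ / ρ := ⟨_, rfl⟩
  have hX : 0 < X := by rw [hXdef]; positivity
  obtain ⟨δμ, hδμdef⟩ : ∃ x : ℝ, x = min (ρ/(16*A₀)) ((a/4)/X) := ⟨_, rfl⟩
  have hδμ : 0 < δμ := by rw [hδμdef]; exact lt_min (by positivity) (by positivity)
  obtain ⟨δφ, hδφdef⟩ : ∃ x : ℝ, x = (ρ/32)/B₀ := ⟨_, rfl⟩
  have hδφ : 0 < δφ := by rw [hδφdef]; positivity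
  obtain ⟨σ₂, hσ₂mem, hφ₂⟩ := phi_small hσs hμ (min δφ (δμ/2)) (lt_min hδφ (by linarith))
  obtain ⟨σ₃, hσ₃def⟩ : ∃ x : ℝ, x = min σ₂ (min σ₁ σ₀) := ⟨_, rfl⟩
  have hσ₃ : 0 < σ₃ := by rw [hσ₃def]; exact lt_min hσ₂mem.1 (lt_min hσ₁ hσ₀)
  have hσ₃σ₂ : σ₃ ≤ σ₂ := by rw [hσ₃def]; exact min_le_left _ _
  have hσ₃σ₁ : σ₃ ≤ σ₁ := by rw [hσ₃def]; exact le_trans (min_le_right _ _) (min_le_left _ _)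
  have hσ₃σ₀ : σ₃ ≤ σ₀ := by rw [hσ₃def]; exact le_trans (min_le_right _ _) (min_le_right _ _)
  obtain ⟨σ, hσdef⟩ : ∃ x : ℝ, x = σ₃ / 2 := ⟨_, rfl⟩
  have hσpos : 0 < σ := by rw [hσdef]; positivity
  have hσσ₀ : σ < σ₀ := by rw [hσdef]; linarith
  have hσσ₁ : σ < σ₁ := by rw [hσdef]; linarith
  have hσσs : σ ≤ σs := by
    have := hσ₂mem.2; rw [hσdef]; linarith
  have hφσ : phi μ σ < min δφ (δμ/2) :=
    lt_of_le_of_lt (phi_mono' hμ (by rw [hσdef]; linarith) hσ₂mem.2) hφ₂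
  have hφσφ : phi μ σ < δφ := lt_of_lt_of_le hφσ (min_le_left _ _)
  have hμσ : μ σ < δμ := by
    have h1 : μ (σ₃/2) ≤ 2 * phi μ σ₃ := mu_le_two_phi hμ hσ₃ (le_trans hσ₃σ₂ hσ₂mem.2)
    have h2 : phi μ σ₃ ≤ phi μ σ₂ := phi_mono' hμ hσ₃σ₂ hσ₂mem.2
    have h3 : phi μ σ₂ < δμ/2 := lt_of_lt_of_le hφ₂ (min_le_right _ _)
    rw [hσdef] at *
    linarith
  have hμσpos : 0 < μ σ := hμ.1 σ ⟨hσpos, hσσs⟩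
  have hμtσ : ∀ t ∈ Set.Ioo (0:ℝ) σ, μ t ≤ μ σ := fun t ht =>
    hμ.2.2.1 ⟨ht.1, le_trans ht.2.le hσσs⟩ ⟨hσpos, hσσs⟩ ht.2.le
  -- the constants
  obtain ⟨Av, hAvdef⟩ : ∃ x : ℝ, x = A₀ * μ σ + (A₁ + 4*A₂) * ε * ρ := ⟨_, rfl⟩
  obtain ⟨Bv, hBvdef⟩ : ∃ x : ℝ, x = B₀ * μ σ + (B₁ + 4*B₂) * ε * ρ := ⟨_, rfl⟩
  have hAv0 : 0 < Av := by rw [hAvdef]; positivity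
  have hBv0 : 0 < Bv := by rw [hBvdef]; positivity
  refine ⟨σ, ⟨hσpos, hσσ₀⟩, ρ/4, ⟨by positivity, by linarith⟩,
    Av, Γv, 8 * Bv / ρ, ε * ρ^2, 4 * ε * ρ, ?_, ?_, ?_⟩
  · -- pointwise bounds
    intro t ht x hx
    have hts : t ∈ Set.Ioc (0:ℝ) σs := ⟨ht.1, by linarith [ht.2]⟩
    have htIcc : t ∈ Set.Icc (0:ℝ) σs := ⟨ht.1.le, hts.2⟩
    have ht₀ : t ∈ Set.Ioo (0:ℝ) σ₀ := ⟨ht.1, lt_trans ht.2 hσσ₀⟩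
    have ht₁ : t ∈ Set.Ioo (0:ℝ) σ₁ := ⟨ht.1, lt_trans ht.2 hσσ₁⟩
    have hwb : ∀ z ∈ Metric.ball (0:ℂ) ρ, ‖w t z‖ ≤ ε * ρ^2 := by
      intro z hz
      exact hw t ht₁ z (by rw [hD ρ]; exact hz)
    have hwd : DifferentiableOn ℂ (w t) (Metric.ball 0 ρ) := by
      refine (hwH t ht₀).mono ?_
      rw [hD R₀]
      exact Metric.ball_subset_ball (by linarith)
    have hqb : ∀ z ∈ Metric.ball (0:ℂ) (ρ/2), ‖deriv (w t) z‖ ≤ 4 * ε * ρ := by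
      intro z hz
      have h := cauchy_est hρ hwd hwb hz
      have heq : 4 * (ε * ρ^2) / ρ = 4 * ε * ρ := by field_simp
      linarith
    have hqd : DifferentiableOn ℂ (deriv (w t)) (Metric.ball 0 ρ) :=
      ((hwd.analyticOnNhd Metric.isOpen_ball).deriv).differentiableOn
    have hsub2 : Metric.ball (0:ℂ) (ρ/2) ⊆ Metric.ball (0:ℂ) ρ :=
      Metric.ball_subset_ball (by linarith)
    have hmaps : Set.MapsTo (fun z : ℂ => (z, w t z, deriv (w t) z))
        (Metric.ball (0:ℂ) (ρ/2)) (Disc Rs ×ˢ Disc ρs ×ˢ Disc ρs) := by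
      intro z hz
      have hz' : ‖z‖ < ρ/2 := by simpa [Metric.mem_ball, dist_zero_right] using hz
      have hw' := hwb z (hsub2 hz)
      have hq' := hqb z hz
      have m1 : z ∈ Disc Rs := by rw [hmemD]; linarith [hR₀s]
      have e1 : ε * ρ^2 ≤ 1 * ρ^2 := mul_le_mul_of_nonneg_right hε1 (sq_nonneg ρ)
      have e2 : ρ * ρ ≤ ρ * 1 := mul_le_mul_of_nonneg_left (by linarith only [hρ1]) hρ.le
      have e3 : ε * ρ ≤ 1 * ρ := mul_le_mul_of_nonneg_right hε1 hρ.le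
      have m2 : w t z ∈ Disc ρs := by
        rw [hmemD]
        have hsq : ρ^2 = ρ * ρ := sq ρ
        linarith only [hw', e1, e2, hsq, hρρs, hρ]
      have m3 : deriv (w t) z ∈ Disc ρs := by
        rw [hmemD]
        linarith only [hq', e3, hρρs, hρ]
      exact Set.mk_mem_prod m1 (Set.mk_mem_prod m2 m3)
    have hgd : DifferentiableOn ℂ (fun z : ℂ => (z, w t z, deriv (w t) z))
        (Metric.ball (0:ℂ) (ρ/2)) :=
      DifferentiableOn.prodMk differentiableOn_id ((hwd.mono hsub2).prodMk (hqd.mono hsub2))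
    have had : DifferentiableOn ℂ (fun z : ℂ => a₁ t z (w t z) (deriv (w t) z))
        (Metric.ball (0:ℂ) (ρ/2)) := by
      have := ((ha₁h t htIcc).comp hgd hmaps)
      simpa [Function.comp_def] using this
    have hbd : DifferentiableOn ℂ (fun z : ℂ => b₁ t z (w t z) (deriv (w t) z))
        (Metric.ball (0:ℂ) (ρ/2)) := by
      have := ((hb₁h t htIcc).comp hgd hmaps)
      simpa [Function.comp_def] using this
    have habound : ∀ z ∈ Metric.ball (0:ℂ) (ρ/2),
        ‖a₁ t z (w t z) (deriv (w t) z)‖ ≤ Av := by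
      intro z hz
      have hm := hmaps hz
      have hb := ha₁bd t hts z (Set.mem_prod.1 hm).1 _ ((Set.mem_prod.1 (Set.mem_prod.1 hm).2).1) _ ((Set.mem_prod.1 (Set.mem_prod.1 hm).2).2)
      have hw' := hwb z (hsub2 hz)
      have hq' := hqb z hz
      have hμt := hμtσ t ht
      calc ‖a₁ t z (w t z) (deriv (w t) z)‖
          ≤ A₀ * μ t + A₁ * ‖w t z‖ + A₂ * ‖deriv (w t) z‖ := hb
        _ ≤ A₀ * μ σ + A₁ * (ε * ρ^2) + A₂ * (4 * ε * ρ) := by gcongr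
        _ ≤ Av := by
            have h0 : ε * ρ * ρ ≤ ε * ρ * 1 :=
              mul_le_mul_of_nonneg_left (by linarith only [hρ1]) (by positivity)
            have f1 : A₁ * (ε * ρ^2) ≤ A₁ * (ε * ρ) := by
              apply mul_le_mul_of_nonneg_left _ hA₁.le
              have hsq : ε * ρ^2 = ε * ρ * ρ := by ring
              linarith only [h0, hsq.le, hsq.ge]
            rw [hAvdef]
            linarith only [f1]
    have hbbound : ∀ z ∈ Metric.ball (0:ℂ) (ρ/2),
        ‖b₁ t z (w t z) (deriv (w t) z)‖ ≤ Bv := by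
      intro z hz
      have hm := hmaps hz
      have hb := hb₁bd t hts z (Set.mem_prod.1 hm).1 _ ((Set.mem_prod.1 (Set.mem_prod.1 hm).2).1) _ ((Set.mem_prod.1 (Set.mem_prod.1 hm).2).2)
      have hw' := hwb z (hsub2 hz)
      have hq' := hqb z hz
      have hμt := hμtσ t ht
      calc ‖b₁ t z (w t z) (deriv (w t) z)‖
          ≤ B₀ * μ t + B₁ * ‖w t z‖ + B₂ * ‖deriv (w t) z‖ := hb
        _ ≤ B₀ * μ σ + B₁ * (ε * ρ^2) + B₂ * (4 * ε * ρ) := by gcongr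
        _ ≤ Bv := by
            have h0 : ε * ρ * ρ ≤ ε * ρ * 1 :=
              mul_le_mul_of_nonneg_left (by linarith only [hρ1]) (by positivity)
            have f1 : B₁ * (ε * ρ^2) ≤ B₁ * (ε * ρ) := by
              apply mul_le_mul_of_nonneg_left _ hB₁.le
              have hsq : ε * ρ^2 = ε * ρ * ρ := by ring
              linarith only [h0, hsq.le, hsq.ge]
            rw [hBvdef]
            linarith only [f1]
    -- memberships of x
    have hx' : ‖x‖ < ρ/4 := by rwa [hmemD] at hx
    have hx2 : x ∈ Metric.ball (0:ℂ) (ρ/2) := by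
      rw [Metric.mem_ball, dist_zero_right]; linarith
    have hx4 : x ∈ Metric.ball (0:ℂ) (ρ/2/2) := by
      rw [Metric.mem_ball, dist_zero_right]; linarith
    have hxρ : x ∈ Metric.ball (0:ℂ) ρ := hsub2 hx2
    refine ⟨habound x hx2, ?_, ?_, hwb x hxρ, hqb x hx2⟩
    · -- the Γ bound
      have hlamb : ‖deriv (fun z : ℂ => lam t z) x‖ ≤ CL := by
        have hxR : x ∈ Metric.ball (0:ℂ) (R₀/2) := by
          rw [Metric.mem_ball, dist_zero_right]; linarith
        exact hClam t htIcc x hxR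
      have hA8 : Av ≤ ρ/8 := by
        have hd1 : δμ ≤ ρ/(16*A₀) := by rw [hδμdef]; exact min_le_left _ _
        have h1 : A₀ * μ σ ≤ ρ/16 := by
          have : A₀ * μ σ ≤ A₀ * (ρ/(16*A₀)) := by
            apply mul_le_mul_of_nonneg_left (by linarith) hA₀.le
          have heq : A₀ * (ρ/(16*A₀)) = ρ/16 := by field_simp
          linarith
        have h2 : (A₁ + 4*A₂) * ε * ρ ≤ ρ/16 := by
          have hh := mul_le_mul_of_nonneg_right hεb hρ.le
          have hh2 : (0:ℝ) ≤ ε * ρ := by positivity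
          linarith only [hh, hh2]
        rw [hAvdef]; linarith
      have haderiv : ‖deriv (fun z : ℂ => a₁ t z (w t z) (deriv (w t) z)) x‖ ≤ 1 := by
        have h := cauchy_est (by positivity : (0:ℝ) < ρ/2) had habound hx4
        have : 4 * Av / (ρ/2) ≤ 1 := by
          rw [div_le_one (by positivity)]
          linarith
        linarith
      calc ‖deriv (fun z : ℂ => lam t z) x +
            deriv (fun z : ℂ => a₁ t z (w t z) (deriv (w t) z)) x‖
          ≤ ‖deriv (fun z : ℂ => lam t z) x‖ +
            ‖deriv (fun z : ℂ => a₁ t z (w t z) (deriv (w t) z)) x‖ := norm_add_le _ _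
        _ ≤ CL + 1 := by linarith
        _ = Γv := hΓdef.symm
    · -- the L bound
      have h := cauchy_est (by positivity : (0:ℝ) < ρ/2) hbd hbbound hx4
      have heq : 4 * Bv / (ρ/2) = 8 * Bv / ρ := by field_simp; ring
      linarith
  · -- A + L < a
    have hLeq : 8 * Bv / ρ = 8 * B₀ * μ σ / ρ + 8 * (B₁ + 4*B₂) * ε := by
      rw [hBvdef]; field_simp
    have hd2 : δμ ≤ (a/4)/X := by
      rw [hδμdef]; exact min_le_right _ _
    have h1 : μ σ * X < a/4 := by
      have hh : δμ * X ≤ a/4 := by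
        rw [← le_div_iff₀ hX]; exact hd2
      have hk := mul_lt_mul_of_pos_right hμσ hX
      linarith only [hh, hk]
    have h1' : A₀ * μ σ + 8 * B₀ * μ σ / ρ = μ σ * X := by
      rw [hXdef]; field_simp
    have h2 : (A₁ + 4*A₂) * ε * ρ ≤ (A₁ + 4*A₂) * ε := by
      have hh := mul_le_mul_of_nonneg_left (show ρ ≤ 1 by linarith only [hρ1])
        (show (0:ℝ) ≤ (A₁ + 4*A₂) * ε by positivity)
      linarith only [hh]
    have h3 : (A₁ + 4*A₂) * ε + 8 * (B₁ + 4*B₂) * ε < a/4 := by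
      rw [hSdef] at hεa
      linarith only [hεa, hε]
    rw [hAvdef]
    linarith
  ·  -- the second smallness inequality
    have h1 : B₀ * phi μ σ < ρ/32 := by
      have : B₀ * phi μ σ < B₀ * δφ := by
        apply mul_lt_mul_of_pos_left hφσφ hB₀
      have heq : B₀ * δφ = ρ/32 := by
        rw [hδφdef]; field_simp
      linarith
    have h2a : ε * T ≤ 1/32 := by linarith only [hεc, hε]
    have h2b : ε * T * ρ ≤ ρ/32 := by
      have hh := mul_le_mul_of_nonneg_right h2a hρ.le
      linarith only [hh]
    have h2c : K₂ * (ε * ρ^2) ≤ K₂ * (ε * ρ) := by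
      apply mul_le_mul_of_nonneg_left _ hK₂.le
      have h0 : ε * ρ * ρ ≤ ε * ρ * 1 :=
        mul_le_mul_of_nonneg_left (by linarith only [hρ1]) (by positivity)
      have hsq : ε * ρ^2 = ε * ρ * ρ := by ring
      linarith only [h0, hsq.le, hsq.ge]
    have h2d : K₂ * (ε * ρ) + (B₂/a) * (4 * ε * ρ) = ε * T * ρ := by
      rw [hTdef]; ring
    have hgoal : B₀ * phi μ σ + K₂ * (ε * ρ^2) + (B₂/a) * (4 * ε * ρ) < ρ/8 := by
      linarith
    calc B₀ * phi μ σ + (B₁ / a + B₂ * Γv / a ^ 2) * (ε * ρ^2) + B₂ / a * (4 * ε * ρ)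
        = B₀ * phi μ σ + K₂ * (ε * ρ^2) + (B₂/a) * (4 * ε * ρ) := by
          rw [hK₂def]
      _ < ρ/8 := hgoal
      _ = ρ/4/2 := by ring
end
end

section
/- Let x(t) be a solution on an interval (t_ξ, t₀] of the characteristic ODE t dx/dt = −b(t,x), x(t₀) = ξ, where b ∈ 𝒳₀((0,σ) × D_R), and let w* (t) = w(t,x(t)), q*(t) = q(t,x(t)) where w, q satisfy along x(t) the ODEs t dw*/dt = (λ(t,x(t)) + a(t,x(t)))w* and t dq*/dt = γ(t,x(t))w* + (λ(t,x(t)) + a(t,x(t)) + ℓ(t,x(t)))q*. Assume Re(λ(s,x) + a(s,x)) < −a and Re(λ(s,x) + a(s,x) + ℓ(s,x)) < −a on (0,σ) × D_R, and |γ| ≤ Γ there. Then for any t₁, τ with t_ξ < t₁ < τ ≤ t₀: |w*(τ)| ≤ (t₁/τ)^a |w*(t₁)| and |q*(τ)| ≤ (t₁/τ)^a ( Γ|w*(t₁)| log(τ/t₁) + |q*(t₁)| ). -/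
open Set MeasureTheory Complex

noncomputable section

/-- Lemma 2.7 : decay estimates along a characteristic curve.  If `x(t)` solves
`t dx/dt = -b(t,x)`, `x(t₀) = ξ`, and `w*(t) = w(t,x(t))`, `q*(t) = q(t,x(t))` satisfy
`t dw*/dt = (λ + a) w*` and `t dq*/dt = γ w* + (λ + a + ℓ) q*` along the curve, with
`Re(λ + a) < -a`, `Re(λ + a + ℓ) < -a` and `|γ| ≤ Γ` on `(0,σ) × D_R`, then
for `t_ξ < t₁ < τ ≤ t₀` one has `|w*(τ)| ≤ (t₁/τ)^a |w*(t₁)|` and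
`|q*(τ)| ≤ (t₁/τ)^a (Γ |w*(t₁)| log(τ/t₁) + |q*(t₁)|)`. -/
theorem decay_along_characteristics
    (σ R : ℝ) (hσ : 0 < σ) (hR : 0 < R)
    (lam af gam ell b : ℝ → ℂ → ℂ)
    -- `λ, a, γ, ℓ, b ∈ 𝒳₀((0,σ) × D_R)`
    (hlamX : ContinuousOn (fun p : ℝ × ℂ => lam p.1 p.2) (Set.Ioo 0 σ ×ˢ Disc R) ∧
      ∀ t ∈ Set.Ioo (0:ℝ) σ, DifferentiableOn ℂ (lam t) (Disc R))
    (hafX : ContinuousOn (fun p : ℝ × ℂ => af p.1 p.2) (Set.Ioo 0 σ ×ˢ Disc R) ∧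
      ∀ t ∈ Set.Ioo (0:ℝ) σ, DifferentiableOn ℂ (af t) (Disc R))
    (hgamX : ContinuousOn (fun p : ℝ × ℂ => gam p.1 p.2) (Set.Ioo 0 σ ×ˢ Disc R) ∧
      ∀ t ∈ Set.Ioo (0:ℝ) σ, DifferentiableOn ℂ (gam t) (Disc R))
    (hellX : ContinuousOn (fun p : ℝ × ℂ => ell p.1 p.2) (Set.Ioo 0 σ ×ˢ Disc R) ∧
      ∀ t ∈ Set.Ioo (0:ℝ) σ, DifferentiableOn ℂ (ell t) (Disc R))
    (hbX : ContinuousOn (fun p : ℝ × ℂ => b p.1 p.2) (Set.Ioo 0 σ ×ˢ Disc R) ∧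
      ∀ t ∈ Set.Ioo (0:ℝ) σ, DifferentiableOn ℂ (b t) (Disc R))
    (a : ℝ) (ha : 0 < a) (Γ : ℝ) (hΓ : 0 ≤ Γ)
    (hRe₁ : ∀ t ∈ Set.Ioo (0:ℝ) σ, ∀ z ∈ Disc R, (lam t z + af t z).re < -a)
    (hRe₂ : ∀ t ∈ Set.Ioo (0:ℝ) σ, ∀ z ∈ Disc R,
      (lam t z + af t z + ell t z).re < -a)
    (hγbd : ∀ t ∈ Set.Ioo (0:ℝ) σ, ∀ z ∈ Disc R, ‖gam t z‖ ≤ Γ)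
    -- the characteristic curve
    (tξ t₀ : ℝ) (htξ : 0 ≤ tξ) (ht₀ : tξ < t₀) (ht₀σ : t₀ < σ)
    (ξ : ℂ) (x : ℝ → ℂ)
    (hxmem : ∀ t ∈ Set.Ioc tξ t₀, x t ∈ Disc R)
    (hxode : ∀ t ∈ Set.Ioc tξ t₀, HasDerivAt x (-(b t (x t)) / (t : ℂ)) t)
    (hxinit : x t₀ = ξ)
    -- `w*`, `q*` along the curve
    (w q : ℝ → ℂ → ℂ)
    (hwode : ∀ t ∈ Set.Ioc tξ t₀, HasDerivAt (fun s : ℝ => w s (x s))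
      ((lam t (x t) + af t (x t)) * w t (x t) / (t : ℂ)) t)
    (hqode : ∀ t ∈ Set.Ioc tξ t₀, HasDerivAt (fun s : ℝ => q s (x s))
      ((gam t (x t) * w t (x t) +
        (lam t (x t) + af t (x t) + ell t (x t)) * q t (x t)) / (t : ℂ)) t) :
    ∀ t₁ τ : ℝ, tξ < t₁ → t₁ < τ → τ ≤ t₀ →
      ‖w τ (x τ)‖ ≤ (t₁ / τ) ^ a * ‖w t₁ (x t₁)‖ ∧
      ‖q τ (x τ)‖ ≤ (t₁ / τ) ^ a *
        (Γ * ‖w t₁ (x t₁)‖ * Real.log (τ / t₁) + ‖q t₁ (x t₁)‖) := by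
  intro t₁ τ ht₁ hlt hτ
  have hle : t₁ ≤ τ := hlt.le
  have ht₁0 : (0:ℝ) < t₁ := lt_of_le_of_lt htξ ht₁
  have hτ0 : (0:ℝ) < τ := ht₁0.trans hlt
  have hsub : Set.Icc t₁ τ ⊆ Set.Ioc tξ t₀ := fun s hs =>
    ⟨lt_of_lt_of_le ht₁ hs.1, le_trans hs.2 hτ⟩
  have hsub2 : ∀ s ∈ Set.Icc t₁ τ, s ∈ Set.Ioo (0:ℝ) σ := fun s hs =>
    ⟨lt_of_lt_of_le ht₁0 hs.1, lt_of_le_of_lt (hs.2.trans hτ) ht₀σ⟩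
  have hspos : ∀ s ∈ Set.Icc t₁ τ, (0:ℝ) < s := fun s hs => lt_of_lt_of_le ht₁0 hs.1
  have hDiscOpen : IsOpen (Disc R) := by
    have : Disc R = Metric.ball (0:ℂ) R := by
      ext z; simp [Disc, Metric.mem_ball, dist_zero_right]
    rw [this]; exact Metric.isOpen_ball
  have hopen : IsOpen (Set.Ioo (0:ℝ) σ ×ˢ Disc R) := isOpen_Ioo.prod hDiscOpen
  have hxc : ∀ s ∈ Set.Icc t₁ τ, ContinuousAt x s := fun s hs =>
    (hxode s (hsub hs)).continuousAt
  have key : ∀ f : ℝ → ℂ → ℂ,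
      ContinuousOn (fun p : ℝ × ℂ => f p.1 p.2) (Set.Ioo 0 σ ×ˢ Disc R) →
      ContinuousOn (fun s => f s (x s)) (Set.Icc t₁ τ) := by
    intro f hf s hs
    have h1 : ContinuousAt (fun s : ℝ => ((s : ℝ), x s)) s :=
      continuousAt_id.prodMk (hxc s hs)
    have hmem : ((s : ℝ), x s) ∈ Set.Ioo (0:ℝ) σ ×ˢ Disc R :=
      ⟨hsub2 s hs, hxmem s (hsub hs)⟩
    have h2 : ContinuousAt (fun p : ℝ × ℂ => f p.1 p.2) ((s : ℝ), x s) :=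
      hf.continuousAt (hopen.mem_nhds hmem)
    have h3 := ContinuousAt.comp (f := fun s : ℝ => ((s : ℝ), x s)) h2 h1
    exact h3.continuousWithinAt
  have hwc : ContinuousOn (fun s => w s (x s)) (Set.Icc t₁ τ) := fun s hs =>
    (hwode s (hsub hs)).continuousAt.continuousWithinAt
  -- the two coefficient functions along the curve
  set c1 : ℝ → ℂ := fun s => (lam s (x s) + af s (x s)) / (s : ℂ) with hc1def
  set c2 : ℝ → ℂ := fun s => (lam s (x s) + af s (x s) + ell s (x s)) / (s : ℂ) with hc2def
  have hden : ∀ s ∈ Set.Icc t₁ τ, ((s : ℂ)) ≠ 0 := fun s hs =>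
    Complex.ofReal_ne_zero.2 (ne_of_gt (hspos s hs))
  have hc1 : ContinuousOn c1 (Set.Icc t₁ τ) :=
    ((key lam hlamX.1).add (key af hafX.1)).div
      Complex.continuous_ofReal.continuousOn hden
  have hc2 : ContinuousOn c2 (Set.Icc t₁ τ) :=
    (((key lam hlamX.1).add (key af hafX.1)).add (key ell hellX.1)).div
      Complex.continuous_ofReal.continuousOn hden
  -- continuous global extensions
  set C1 : ℝ → ℂ := Set.IccExtend hle ((Set.Icc t₁ τ).restrict c1) with hC1def
  set C2 : ℝ → ℂ := Set.IccExtend hle ((Set.Icc t₁ τ).restrict c2) with hC2def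
  have hC1c : Continuous C1 := hc1.restrict.Icc_extend'
  have hC2c : Continuous C2 := hc2.restrict.Icc_extend'
  have hC1eq : ∀ s ∈ Set.Icc t₁ τ, C1 s = c1 s := fun s hs =>
    Set.IccExtend_of_mem hle _ hs
  have hC2eq : ∀ s ∈ Set.Icc t₁ τ, C2 s = c2 s := fun s hs =>
    Set.IccExtend_of_mem hle _ hs
  -- real-part bounds
  have hC1re : ∀ s ∈ Set.Icc t₁ τ, (C1 s).re ≤ -a / s := by
    intro s hs
    rw [hC1eq s hs]
    have : ((lam s (x s) + af s (x s)) / (s:ℂ)).re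
        = (lam s (x s) + af s (x s)).re / s := Complex.div_ofReal_re _ _
    rw [hc1def]; simp only [this]
    exact (div_le_div_iff_of_pos_right (hspos s hs)).2
      (le_of_lt (hRe₁ s (hsub2 s hs) (x s) (hxmem s (hsub hs))))
  have hC2re : ∀ s ∈ Set.Icc t₁ τ, (C2 s).re ≤ -a / s := by
    intro s hs
    rw [hC2eq s hs]
    have : ((lam s (x s) + af s (x s) + ell s (x s)) / (s:ℂ)).re
        = (lam s (x s) + af s (x s) + ell s (x s)).re / s := Complex.div_ofReal_re _ _
    rw [hc2def]; simp only [this]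
    exact (div_le_div_iff_of_pos_right (hspos s hs)).2
      (le_of_lt (hRe₂ s (hsub2 s hs) (x s) (hxmem s (hsub hs))))
  -- key integral estimate
  have reint : ∀ C : ℝ → ℂ, Continuous C → (∀ s ∈ Set.Icc t₁ τ, (C s).re ≤ -a / s) →
      ∀ u v : ℝ, t₁ ≤ u → u ≤ v → v ≤ τ →
      Real.exp ((∫ s in u..v, C s).re) ≤ (u / v) ^ a := by
    intro C hC hbd u v hu huv hv
    have hu0 : (0:ℝ) < u := lt_of_lt_of_le ht₁0 hu
    have hv0 : (0:ℝ) < v := lt_of_lt_of_le hu0 huv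
    have h1 : (∫ s in u..v, C s).re = ∫ s in u..v, (C s).re := by
      have := Complex.reCLM.intervalIntegral_comp_comm (hC.intervalIntegrable (μ := MeasureTheory.volume) u v)
      simpa using this.symm
    have h2 : (∫ s in u..v, (C s).re) ≤ ∫ s in u..v, -a / s := by
      apply intervalIntegral.integral_mono_on huv
        ((Complex.continuous_re.comp hC).intervalIntegrable (μ := MeasureTheory.volume) u v)
      · apply ContinuousOn.intervalIntegrable
        apply ContinuousOn.div continuousOn_const continuousOn_id
        intro s hs
        rw [Set.uIcc_of_le huv] at hs
        exact ne_of_gt (lt_of_lt_of_le hu0 hs.1)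
      · intro s hs
        exact hbd s ⟨le_trans hu hs.1, le_trans hs.2 hv⟩
    have h3 : (∫ s in u..v, -a / s) = -a * Real.log (v / u) := by
      have h0 : (0:ℝ) ∉ Set.uIcc u v := by
        rw [Set.uIcc_of_le huv]
        intro h; exact absurd h.1 (not_le.2 hu0)
      calc (∫ s in u..v, -a / s) = ∫ s in u..v, -a * (1 / s) := by
            congr 1; ext s; ring
        _ = -a * ∫ s in u..v, 1 / s := intervalIntegral.integral_const_mul _ _
        _ = -a * Real.log (v / u) := by rw [integral_one_div h0]
    rw [Real.rpow_def_of_pos (div_pos hu0 hv0)]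
    apply Real.exp_le_exp.2
    have hlog : Real.log (u / v) * a = -a * Real.log (v / u) := by
      rw [Real.log_div (ne_of_gt hu0) (ne_of_gt hv0),
        Real.log_div (ne_of_gt hv0) (ne_of_gt hu0)]
      ring
    rw [hlog, h1]
    linarith [h2, h3.le, h3.ge]
  -- the integral of C1 and the explicit formula for w along the curve
  set I1 : ℝ → ℂ := fun u => ∫ s in t₁..u, C1 s with hI1def
  have hI1d : ∀ u : ℝ, HasDerivAt I1 (C1 u) u := fun u =>
    (hC1c.integral_hasStrictDerivAt t₁ u).hasDerivAt
  have hF : ∀ u ∈ Set.Icc t₁ τ, HasDerivAt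
      (fun s => w s (x s) * Complex.exp (-(I1 s))) 0 u := by
    intro u hu
    have hw := hwode u (hsub hu)
    have hE : HasDerivAt (fun s => Complex.exp (-(I1 s)))
        (Complex.exp (-(I1 u)) * -(C1 u)) u := ((hI1d u).neg).cexp
    have := hw.mul hE
    convert this using 1
    · rfl
    · rfl
    rw [hC1eq u hu, hc1def]
    ring
  have hFc : ContinuousOn (fun s => w s (x s) * Complex.exp (-(I1 s))) (Set.Icc t₁ τ) :=
    fun s hs => (hF s hs).continuousAt.continuousWithinAt
  have hFconst := constant_of_has_deriv_right_zero hFc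
    (fun s hs => (hF s (Set.Ico_subset_Icc_self hs)).hasDerivWithinAt)
  have hI1t₁ : I1 t₁ = 0 := intervalIntegral.integral_same
  have wformula : ∀ s ∈ Set.Icc t₁ τ, w s (x s) = w t₁ (x t₁) * Complex.exp (I1 s) := by
    intro s hs
    have h := hFconst s hs
    rw [hI1t₁, neg_zero, Complex.exp_zero, mul_one] at h
    calc w s (x s) = w s (x s) * Complex.exp (-(I1 s)) * Complex.exp (I1 s) := by
          rw [mul_assoc, ← Complex.exp_add, neg_add_cancel, Complex.exp_zero, mul_one]
      _ = w t₁ (x t₁) * Complex.exp (I1 s) := by rw [h]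
  have wbound : ∀ s ∈ Set.Icc t₁ τ, ‖w s (x s)‖ ≤ (t₁ / s) ^ a * ‖w t₁ (x t₁)‖ := by
    intro s hs
    rw [wformula s hs, norm_mul, mul_comm]
    apply mul_le_mul_of_nonneg_right _ (norm_nonneg _)
    rw [Complex.norm_exp]
    exact reint C1 hC1c hC1re t₁ s le_rfl hs.1 hs.2
  refine ⟨by simpa using wbound τ ⟨hle, le_rfl⟩, ?_⟩
  -- now the q estimate
  set I2 : ℝ → ℂ := fun u => ∫ s in t₁..u, C2 s with hI2def
  have hI2d : ∀ u : ℝ, HasDerivAt I2 (C2 u) u := fun u =>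
    (hC2c.integral_hasStrictDerivAt t₁ u).hasDerivAt
  set g : ℝ → ℂ := fun s =>
    gam s (x s) * w s (x s) * Complex.exp (-(I2 s)) / (s : ℂ) with hgdef
  have hG : ∀ u ∈ Set.Icc t₁ τ, HasDerivAt
      (fun s => q s (x s) * Complex.exp (-(I2 s))) (g u) u := by
    intro u hu
    have hq := hqode u (hsub hu)
    have hE : HasDerivAt (fun s => Complex.exp (-(I2 s)))
        (Complex.exp (-(I2 u)) * -(C2 u)) u := ((hI2d u).neg).cexp
    have := hq.mul hE
    convert this using 1
    · rfl
    · rfl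
    rw [hgdef, hC2eq u hu, hc2def]
    ring
  have hgc : ContinuousOn g (Set.Icc t₁ τ) := by
    apply ContinuousOn.div _ Complex.continuous_ofReal.continuousOn hden
    apply ContinuousOn.mul ((key gam hgamX.1).mul hwc)
    exact fun s hs => ((hI2d s).neg.cexp.continuousAt).continuousWithinAt
  have huIcc : Set.uIcc t₁ τ = Set.Icc t₁ τ := Set.uIcc_of_le hle
  have hgint : IntervalIntegrable g MeasureTheory.volume t₁ τ :=
    ContinuousOn.intervalIntegrable (by rw [huIcc]; exact hgc)
  have hftc : (∫ s in t₁..τ, g s) =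
      q τ (x τ) * Complex.exp (-(I2 τ)) - q t₁ (x t₁) * Complex.exp (-(I2 t₁)) := by
    apply intervalIntegral.integral_eq_sub_of_hasDerivAt _ hgint
    intro s hs
    rw [Set.uIcc_of_le hle] at hs
    exact hG s hs
  have hI2t₁ : I2 t₁ = 0 := intervalIntegral.integral_same
  rw [hI2t₁, neg_zero, Complex.exp_zero, mul_one] at hftc
  have hqformula : q τ (x τ) =
      (q t₁ (x t₁) + ∫ s in t₁..τ, g s) * Complex.exp (I2 τ) := by
    have : q τ (x τ) * Complex.exp (-(I2 τ)) = q t₁ (x t₁) + ∫ s in t₁..τ, g s := by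
      rw [hftc]; ring
    calc q τ (x τ) = q τ (x τ) * Complex.exp (-(I2 τ)) * Complex.exp (I2 τ) := by
          rw [mul_assoc, ← Complex.exp_add, neg_add_cancel, Complex.exp_zero, mul_one]
      _ = (q t₁ (x t₁) + ∫ s in t₁..τ, g s) * Complex.exp (I2 τ) := by rw [this]
  -- pointwise bound on g
  set K : ℝ := Γ * ‖w t₁ (x t₁)‖ * (t₁ / τ) ^ a * Real.exp (-(I2 τ).re) with hKdef
  have hEpos : (0:ℝ) < Real.exp ((I2 τ).re) := Real.exp_pos _
  have hgbd : ∀ s ∈ Set.Icc t₁ τ, ‖g s‖ ≤ K * (1 / s) := by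
    intro s hs
    have hs0 : (0:ℝ) < s := hspos s hs
    have h1 : ‖g s‖ = ‖gam s (x s)‖ * ‖w s (x s)‖ * Real.exp (-(I2 s).re) / s := by
      rw [hgdef]
      simp [norm_mul, norm_div, Complex.norm_exp, abs_of_pos hs0]
    have h2 : Real.exp (-(I2 s).re) ≤ Real.exp (-(I2 τ).re) * (s / τ) ^ a := by
      have hdiff : I2 τ - I2 s = ∫ u in s..τ, C2 u := by
        rw [hI2def]
        exact intervalIntegral.integral_interval_sub_left
          (hC2c.intervalIntegrable (μ := MeasureTheory.volume) _ _) (hC2c.intervalIntegrable (μ := MeasureTheory.volume) _ _)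
      have hre := reint C2 hC2c hC2re s τ hs.1 hs.2 le_rfl
      have : Real.exp ((I2 τ).re - (I2 s).re) ≤ (s / τ) ^ a := by
        have : (I2 τ).re - (I2 s).re = (∫ u in s..τ, C2 u).re := by
          rw [← hdiff]; simp [Complex.sub_re]
        rw [this]; exact hre
      calc Real.exp (-(I2 s).re)
          = Real.exp (-(I2 τ).re) * Real.exp ((I2 τ).re - (I2 s).re) := by
            rw [← Real.exp_add]; ring_nf
        _ ≤ Real.exp (-(I2 τ).re) * (s / τ) ^ a :=
            mul_le_mul_of_nonneg_left this (Real.exp_pos _).le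
    have h3 : ‖gam s (x s)‖ ≤ Γ := hγbd s (hsub2 s hs) (x s) (hxmem s (hsub hs))
    have h4 := wbound s hs
    have hrp : (t₁ / s) ^ a * (s / τ) ^ a = (t₁ / τ) ^ a := by
      rw [← Real.mul_rpow (by positivity) (by positivity)]
      congr 1
      field_simp
    rw [h1, hKdef]
    rw [div_le_iff₀ hs0]
    have hnn1 : (0:ℝ) ≤ ‖w s (x s)‖ := norm_nonneg _
    have hnn2 : (0:ℝ) ≤ Real.exp (-(I2 s).re) := (Real.exp_pos _).le
    calc ‖gam s (x s)‖ * ‖w s (x s)‖ * Real.exp (-(I2 s).re)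
        ≤ Γ * ((t₁ / s) ^ a * ‖w t₁ (x t₁)‖) * (Real.exp (-(I2 τ).re) * (s / τ) ^ a) := by
          refine mul_le_mul (mul_le_mul h3 h4 hnn1 hΓ) h2 hnn2 (by positivity)
      _ = Γ * ‖w t₁ (x t₁)‖ * ((t₁ / s) ^ a * (s / τ) ^ a) * Real.exp (-(I2 τ).re) := by
          ring
      _ = Γ * ‖w t₁ (x t₁)‖ * (t₁ / τ) ^ a * Real.exp (-(I2 τ).re) := by rw [hrp]
      _ = Γ * ‖w t₁ (x t₁)‖ * (t₁ / τ) ^ a * Real.exp (-(I2 τ).re) * (1 / s) * s := by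
          field_simp
  have hKnn : (0:ℝ) ≤ K := by rw [hKdef]; positivity
  have hintbd : ‖∫ s in t₁..τ, g s‖ ≤ K * Real.log (τ / t₁) := by
    calc ‖∫ s in t₁..τ, g s‖ ≤ ∫ s in t₁..τ, ‖g s‖ :=
          intervalIntegral.norm_integral_le_integral_norm hle
      _ ≤ ∫ s in t₁..τ, K * (1 / s) := by
          apply intervalIntegral.integral_mono_on hle
          · exact ContinuousOn.intervalIntegrable (by rw [huIcc]; exact hgc.norm)
          · apply ContinuousOn.intervalIntegrable
            apply ContinuousOn.mul continuousOn_const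
            apply ContinuousOn.div continuousOn_const continuousOn_id
            intro s hs
            rw [Set.uIcc_of_le hle] at hs
            exact ne_of_gt (hspos s hs)
          · exact hgbd
      _ = K * ∫ s in t₁..τ, 1 / s := intervalIntegral.integral_const_mul _ _
      _ = K * Real.log (τ / t₁) := by
          rw [integral_one_div]
          rw [Set.uIcc_of_le hle]
          intro h; exact absurd h.1 (not_le.2 ht₁0)
  have hexpbd : Real.exp ((I2 τ).re) ≤ (t₁ / τ) ^ a :=
    reint C2 hC2c hC2re t₁ τ le_rfl hle le_rfl
  -- assemble
  have hqnorm : ‖q τ (x τ)‖ ≤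
      (‖q t₁ (x t₁)‖ + K * Real.log (τ / t₁)) * Real.exp ((I2 τ).re) := by
    rw [hqformula, norm_mul]
    refine mul_le_mul (le_trans (norm_add_le _ _) (by linarith [hintbd]))
      (le_of_eq (by rw [Complex.norm_exp])) (norm_nonneg _) ?_
    have : (0:ℝ) ≤ K * Real.log (τ / t₁) := mul_nonneg hKnn
      (Real.log_nonneg ((one_le_div ht₁0).2 hle))
    positivity
  have hlog0 : (0:ℝ) ≤ Real.log (τ / t₁) :=
    Real.log_nonneg ((one_le_div ht₁0).2 hle)
  have hKe : K * Real.exp ((I2 τ).re) =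
      Γ * ‖w t₁ (x t₁)‖ * (t₁ / τ) ^ a * (Real.exp (-(I2 τ).re) * Real.exp ((I2 τ).re)) := by
    rw [hKdef]; ring
  have hexp1 : Real.exp (-(I2 τ).re) * Real.exp ((I2 τ).re) = 1 := by
    rw [← Real.exp_add]; simp
  have hq1 : ‖q τ (x τ)‖ ≤ ‖q t₁ (x t₁)‖ * Real.exp ((I2 τ).re)
      + Γ * ‖w t₁ (x t₁)‖ * (t₁ / τ) ^ a * Real.log (τ / t₁) := by
    have : (‖q t₁ (x t₁)‖ + K * Real.log (τ / t₁)) * Real.exp ((I2 τ).re)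
        = ‖q t₁ (x t₁)‖ * Real.exp ((I2 τ).re)
          + K * Real.exp ((I2 τ).re) * Real.log (τ / t₁) := by ring
    rw [this, hKe, hexp1, mul_one] at hqnorm
    linarith [hqnorm]
  have hq2 : ‖q t₁ (x t₁)‖ * Real.exp ((I2 τ).re) ≤ ‖q t₁ (x t₁)‖ * (t₁ / τ) ^ a :=
    mul_le_mul_of_nonneg_left hexpbd (norm_nonneg _)
  calc ‖q τ (x τ)‖ ≤ ‖q t₁ (x t₁)‖ * (t₁ / τ) ^ a
        + Γ * ‖w t₁ (x t₁)‖ * (t₁ / τ) ^ a * Real.log (τ / t₁) := by linarith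
    _ = (t₁ / τ) ^ a * (Γ * ‖w t₁ (x t₁)‖ * Real.log (τ / t₁) + ‖q t₁ (x t₁)‖) := by ring
end
end

section
/- Let x(t) solve t dx/dt = −b(t,x), x(t₀) = ξ on (t_ξ, t₀] ⊂ (0,σ), where b satisfies the bound |b(t,x)| ≤ B₀μ(t) + B₁|w(t,x)| + B₂|q(t,x)| with w*(t) = w(t,x(t)), q*(t) = q(t,x(t)) satisfying, for t_ξ < t₁ < τ ≤ t₀, |w*(τ)| ≤ (t₁/τ)^a |w*(t₁)| and |q*(τ)| ≤ (t₁/τ)^a ( Γ|w*(t₁)| log(τ/t₁) + |q*(t₁)| ) for some a > 0, Γ ≥ 0. Then for any t₁ ∈ (t_ξ, t₀): |x(t₁)| ≤ |ξ| + B₀(φ(t₀) − φ(t₁)) + (B₁/a + B₂Γ/a²)|w*(t₁)| + (B₂/a)|q*(t₁)|, where φ(t) = ∫₀^t μ(s)/s ds. -/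
open Set MeasureTheory Complex

noncomputable section

namespace BoundOnCharAux

lemma myII {t₁ t₀ : ℝ} (h1 : 0 < t₁) (h2 : t₁ ≤ t₀) {F : ℝ → ℝ}
    (hF : ∀ t : ℝ, 0 < t → ContinuousAt F t) : IntervalIntegrable F volume t₁ t₀ :=
  ContinuousOn.intervalIntegrable (fun t ht =>
    (hF t (lt_of_lt_of_le h1 (by rw [uIcc_of_le h2] at ht; exact ht.1))).continuousWithinAt)

lemma myContAt1 {t t₁ a : ℝ} (ht : 0 < t) (h1 : 0 < t₁) :
    ContinuousAt (fun s : ℝ => (t₁ / s) ^ a) t :=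
  (continuousAt_const.div continuousAt_id ht.ne').rpow_const (Or.inl (div_pos h1 ht).ne')

lemma myContAt2 {t t₁ : ℝ} (ht : 0 < t) (h1 : 0 < t₁) :
    ContinuousAt (fun s : ℝ => Real.log (s / t₁)) t :=
  (continuousAt_id.div continuousAt_const h1.ne').log (div_pos ht h1).ne'

lemma aux_rpow_integral {a t₁ t₀ : ℝ} (ha : 0 < a) (h1 : 0 < t₁) (h2 : t₁ ≤ t₀) :
    ∫ t in t₁..t₀, t ^ (-a - 1) ≤ t₁ ^ (-a) / a := by
  rw [integral_rpow (Or.inr ⟨by intro h; nlinarith [sub_eq_iff_eq_add.mp h],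
    by rw [uIcc_of_le h2]; exact fun h => absurd h.1 (by push_neg; linarith)⟩)]
  have h3 : (-a - 1 : ℝ) + 1 = -a := by ring
  rw [h3]
  have h4 : (0:ℝ) ≤ t₀ ^ (-a) := Real.rpow_nonneg (h1.trans_le h2).le _
  have h6 : (t₀ ^ (-a) - t₁ ^ (-a)) / -a = (t₁ ^ (-a) - t₀ ^ (-a)) / a := by
    rw [div_neg]; ring
  rw [h6]
  gcongr
  linarith

lemma eq_aux {t t₁ a : ℝ} (ht : 0 < t) (h1 : 0 < t₁) :
    (t₁ / t) ^ a / t = t₁ ^ a * t ^ (-a - 1) := by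
  rw [Real.div_rpow h1.le ht.le, Real.rpow_sub ht, Real.rpow_one, Real.rpow_neg ht.le]
  ring

lemma I1 {a t₁ t₀ : ℝ} (ha : 0 < a) (h1 : 0 < t₁) (h2 : t₁ ≤ t₀) :
    ∫ t in t₁..t₀, (t₁ / t) ^ a / t ≤ 1 / a := by
  have hc : EqOn (fun t => (t₁ / t) ^ a / t) (fun t => t₁ ^ a * t ^ (-a - 1)) (uIcc t₁ t₀) := by
    intro t ht
    rw [uIcc_of_le h2] at ht
    exact eq_aux (h1.trans_le ht.1) h1
  rw [intervalIntegral.integral_congr hc, intervalIntegral.integral_const_mul]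
  calc t₁ ^ a * ∫ t in t₁..t₀, t ^ (-a - 1) ≤ t₁ ^ a * (t₁ ^ (-a) / a) := by
        have := aux_rpow_integral ha h1 h2
        have h0 : (0:ℝ) ≤ t₁ ^ a := Real.rpow_nonneg h1.le a
        nlinarith
    _ = 1 / a := by
        rw [mul_div_assoc', ← Real.rpow_add h1, add_neg_cancel, Real.rpow_zero]

lemma aux_log_integral {a t₁ t₀ : ℝ} (ha : 0 < a) (h1 : 0 < t₁) (h2 : t₁ ≤ t₀) :
    ∫ t in t₁..t₀, t ^ (-a - 1) * Real.log (t / t₁) ≤ t₁ ^ (-a) / a ^ 2 := by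
  set F : ℝ → ℝ := fun t => -(1/a) * (t ^ (-a) * Real.log (t / t₁)) + -(1/a^2) * t ^ (-a) with hF
  have ht₀0 : 0 < t₀ := h1.trans_le h2
  have hderiv : ∀ t ∈ uIcc t₁ t₀, HasDerivAt F (t ^ (-a - 1) * Real.log (t / t₁)) t := by
    intro t ht
    rw [uIcc_of_le h2] at ht
    have ht0 : 0 < t := h1.trans_le ht.1
    have hd1 : HasDerivAt (fun s : ℝ => s ^ (-a)) (-a * t ^ (-a - 1)) t :=
      Real.hasDerivAt_rpow_const (Or.inl ht0.ne')
    have hd2 : HasDerivAt (fun s : ℝ => Real.log (s / t₁)) t⁻¹ t := by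
      have h := (Real.hasDerivAt_log (div_pos ht0 h1).ne').comp t ((hasDerivAt_id t).div_const t₁)
      exact h.congr_deriv (by field_simp)
    have h3 := ((hd1.mul hd2).const_mul (-(1/a))).add ((hd1.const_mul (-(1/a^2))))
    refine h3.congr_deriv ?_
    have key : t ^ (-a) * t⁻¹ = t ^ (-a - 1) := by
      rw [Real.rpow_sub ht0, Real.rpow_one]; ring
    rw [← key]
    field_simp
    ring
  have hint : IntervalIntegrable (fun t => t ^ (-a - 1) * Real.log (t / t₁)) volume t₁ t₀ :=
    myII h1 h2 (fun t ht => (Real.continuousAt_rpow_const t _ (Or.inl ht.ne')).mul (myContAt2 ht h1))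
  rw [intervalIntegral.integral_eq_sub_of_hasDerivAt hderiv hint]
  have e1 : F t₁ = -(1/a^2) * t₁ ^ (-a) := by
    simp [hF, div_self h1.ne', Real.log_one]
  have e2 : F t₀ ≤ 0 := by
    have p1 : (0:ℝ) ≤ t₀ ^ (-a) := Real.rpow_nonneg ht₀0.le _
    have p2 : (0:ℝ) ≤ Real.log (t₀ / t₁) := Real.log_nonneg ((one_le_div h1).2 h2)
    have q1 : -(1/a) * (t₀ ^ (-a) * Real.log (t₀ / t₁)) ≤ 0 := by
      apply mul_nonpos_of_nonpos_of_nonneg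
      · simp only [neg_nonpos]; positivity
      · positivity
    have q2 : -(1/a^2) * t₀ ^ (-a) ≤ 0 := by
      apply mul_nonpos_of_nonpos_of_nonneg
      · simp only [neg_nonpos]; positivity
      · exact p1
    simp only [hF]; linarith
  have e3 : (1/a^2) * t₁ ^ (-a) = t₁ ^ (-a) / a^2 := by ring
  have e4 : F t₀ - F t₁ = F t₀ + (1/a^2) * t₁ ^ (-a) := by rw [e1]; ring
  rw [e4]
  clear_value F
  linarith

lemma I2 {a t₁ t₀ : ℝ} (ha : 0 < a) (h1 : 0 < t₁) (h2 : t₁ ≤ t₀) :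
    ∫ t in t₁..t₀, (t₁ / t) ^ a * Real.log (t / t₁) / t ≤ 1 / a ^ 2 := by
  have hc : EqOn (fun t => (t₁ / t) ^ a * Real.log (t / t₁) / t)
      (fun t => t₁ ^ a * (t ^ (-a - 1) * Real.log (t / t₁))) (uIcc t₁ t₀) := by
    intro t ht
    rw [uIcc_of_le h2] at ht
    have ht0 : 0 < t := h1.trans_le ht.1
    have := eq_aux (a := a) ht0 h1
    calc (t₁ / t) ^ a * Real.log (t / t₁) / t = ((t₁ / t) ^ a / t) * Real.log (t / t₁) := by ring
      _ = t₁ ^ a * (t ^ (-a - 1) * Real.log (t / t₁)) := by rw [this]; ring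
  rw [intervalIntegral.integral_congr hc, intervalIntegral.integral_const_mul]
  calc t₁ ^ a * ∫ t in t₁..t₀, t ^ (-a - 1) * Real.log (t / t₁)
      ≤ t₁ ^ a * (t₁ ^ (-a) / a ^ 2) := by
        have := aux_log_integral ha h1 h2
        have h0 : (0:ℝ) ≤ t₁ ^ a := Real.rpow_nonneg h1.le a
        nlinarith
    _ = 1 / a ^ 2 := by
        rw [mul_div_assoc', ← Real.rpow_add h1, add_neg_cancel, Real.rpow_zero]

end BoundOnCharAux

open BoundOnCharAux

/-- Lemma 2.8 : bound on the characteristic curve.  If `x(t)` solves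
`t dx/dt = -b(t,x)`, `x(t₀) = ξ` on `(t_ξ, t₀] ⊂ (0,σ)`, with
`|b(t,x)| ≤ B₀μ(t) + B₁|w(t,x)| + B₂|q(t,x)|` along the curve, and `w* = w(·,x(·))`,
`q* = q(·,x(·))` satisfy the decay estimates of Lemma 2.7, then for `t₁ ∈ (t_ξ,t₀)`,
`|x(t₁)| ≤ |ξ| + B₀(φ(t₀) - φ(t₁)) + (B₁/a + B₂Γ/a²)|w*(t₁)| + (B₂/a)|q*(t₁)|`. -/
theorem bound_on_characteristics
    (σ : ℝ) (hσ : 0 < σ)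
    (μ : ℝ → ℝ) (hμ : IsWeight σ μ)
    (B₀ B₁ B₂ : ℝ) (hB₀ : 0 < B₀) (hB₁ : 0 < B₁) (hB₂ : 0 < B₂)
    (a : ℝ) (ha : 0 < a) (Γ : ℝ) (hΓ : 0 ≤ Γ)
    (b : ℝ → ℂ → ℂ) (w q : ℝ → ℂ → ℂ)
    (tξ t₀ : ℝ) (htξ : 0 ≤ tξ) (ht₀ : tξ < t₀) (ht₀σ : t₀ ≤ σ)
    (ξ : ℂ) (x : ℝ → ℂ)
    (hxode : ∀ t ∈ Set.Ioc tξ t₀, HasDerivAt x (-(b t (x t)) / (t : ℂ)) t)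
    (hxinit : x t₀ = ξ)
    (hbbd : ∀ t ∈ Set.Ioc tξ t₀,
      ‖b t (x t)‖ ≤ B₀ * μ t + B₁ * ‖w t (x t)‖ + B₂ * ‖q t (x t)‖)
    (hdecay : ∀ t₁ τ : ℝ, tξ < t₁ → t₁ < τ → τ ≤ t₀ →
      ‖w τ (x τ)‖ ≤ (t₁ / τ) ^ a * ‖w t₁ (x t₁)‖ ∧
      ‖q τ (x τ)‖ ≤ (t₁ / τ) ^ a *
        (Γ * ‖w t₁ (x t₁)‖ * Real.log (τ / t₁) + ‖q t₁ (x t₁)‖)) :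
    ∀ t₁ ∈ Set.Ioo tξ t₀,
      ‖x t₁‖ ≤ ‖ξ‖ + B₀ * (phi μ t₀ - phi μ t₁) +
        (B₁ / a + B₂ * Γ / a ^ 2) * ‖w t₁ (x t₁)‖ + (B₂ / a) * ‖q t₁ (x t₁)‖ := by
  obtain ⟨hμpos, hμcont, hμmono, hμint⟩ := hμ
  intro t₁ ht₁
  obtain ⟨ht₁l, ht₁r⟩ := ht₁
  have ht₁0 : 0 < t₁ := lt_of_le_of_lt htξ ht₁l
  have ht₀0 : 0 < t₀ := ht₁0.trans ht₁r
  set Cw := ‖w t₁ (x t₁)‖ with hCw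
  set Cq := ‖q t₁ (x t₁)‖ with hCq
  have hCw0 : 0 ≤ Cw := norm_nonneg _
  have hCq0 : 0 ≤ Cq := norm_nonneg _
  have hsub : Icc t₁ t₀ ⊆ Ioc tξ t₀ := fun t ht => ⟨ht₁l.trans_le ht.1, ht.2⟩
  -- decay on the closed interval
  have hdecay' : ∀ t ∈ Icc t₁ t₀,
      ‖w t (x t)‖ ≤ (t₁ / t) ^ a * Cw ∧
      ‖q t (x t)‖ ≤ (t₁ / t) ^ a * (Γ * Cw * Real.log (t / t₁) + Cq) := by
    intro t ht
    rcases eq_or_lt_of_le ht.1 with rfl | hlt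
    · constructor
      · rw [div_self ht₁0.ne', Real.one_rpow, one_mul]
      · rw [div_self ht₁0.ne', Real.one_rpow, one_mul, Real.log_one, mul_zero, zero_add]
    · exact hdecay t₁ t ht₁l hlt ht.2
  -- the three pieces of the majorant
  set f₀ : ℝ → ℝ := fun t => B₀ * (μ t / t) with hf₀
  set f₁ : ℝ → ℝ := fun t => (B₁ * Cw + B₂ * Cq) * ((t₁ / t) ^ a / t) with hf₁
  set f₂ : ℝ → ℝ := fun t => (B₂ * Γ * Cw) * ((t₁ / t) ^ a * Real.log (t / t₁) / t) with hf₂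
  set M : ℝ → ℝ := fun t => f₀ t + (f₁ t + f₂ t) with hM
  -- integrability of the pieces
  have hint₀ : IntervalIntegrable f₀ volume t₁ t₀ := by
    rw [intervalIntegrable_iff_integrableOn_Ioc_of_le ht₁r.le]
    exact (hμint.mono_set (Ioc_subset_Ioc ht₁0.le ht₀σ)).const_mul B₀
  have hint₁ : IntervalIntegrable f₁ volume t₁ t₀ :=
    myII ht₁0 ht₁r.le (fun t ht =>
      continuousAt_const.mul ((myContAt1 ht ht₁0).div continuousAt_id ht.ne'))
  have hint₂ : IntervalIntegrable f₂ volume t₁ t₀ :=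
    myII ht₁0 ht₁r.le (fun t ht =>
      continuousAt_const.mul (((myContAt1 ht ht₁0).mul (myContAt2 ht ht₁0)).div
        continuousAt_id ht.ne'))
  have hintM : IntervalIntegrable M volume t₁ t₀ := hint₀.add (hint₁.add hint₂)
  -- the norm bound
  have hbound : ∀ t ∈ Icc t₁ t₀, ‖-(b t (x t)) / (t : ℂ)‖ ≤ M t := by
    intro t ht
    have ht0 : 0 < t := ht₁0.trans_le ht.1
    have htmem : t ∈ Ioc tξ t₀ := hsub ht
    have h1 : ‖-(b t (x t)) / (t : ℂ)‖ = ‖b t (x t)‖ / t := by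
      rw [norm_div, norm_neg, Complex.norm_real, Real.norm_eq_abs, abs_of_pos ht0]
    rw [h1]
    have h2 := hbbd t htmem
    obtain ⟨hw, hq⟩ := hdecay' t ht
    have h3 : ‖b t (x t)‖ ≤ B₀ * μ t + B₁ * ((t₁ / t) ^ a * Cw) +
        B₂ * ((t₁ / t) ^ a * (Γ * Cw * Real.log (t / t₁) + Cq)) := by
      have l1 : B₁ * ‖w t (x t)‖ ≤ B₁ * ((t₁ / t) ^ a * Cw) :=
        mul_le_mul_of_nonneg_left hw hB₁.le
      have l2 : B₂ * ‖q t (x t)‖ ≤ B₂ * ((t₁ / t) ^ a * (Γ * Cw * Real.log (t / t₁) + Cq)) :=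
        mul_le_mul_of_nonneg_left hq hB₂.le
      linarith
    calc ‖b t (x t)‖ / t ≤ (B₀ * μ t + B₁ * ((t₁ / t) ^ a * Cw) +
          B₂ * ((t₁ / t) ^ a * (Γ * Cw * Real.log (t / t₁) + Cq))) / t := by gcongr
      _ = M t := by simp only [hM, hf₀, hf₁, hf₂]; field_simp; ring
  -- interval integrability of the derivative
  have hg_int : IntervalIntegrable (fun t => -(b t (x t)) / (t : ℂ)) volume t₁ t₀ := by
    rw [intervalIntegrable_iff_integrableOn_Ioc_of_le ht₁r.le]
    have hMint : IntegrableOn M (Ioc t₁ t₀) volume :=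
      (intervalIntegrable_iff_integrableOn_Ioc_of_le ht₁r.le).1 hintM
    have hmeas : AEStronglyMeasurable (fun t => -(b t (x t)) / (t : ℂ))
        (volume.restrict (Ioc t₁ t₀)) := by
      have heq : ∀ t ∈ Ioc t₁ t₀, deriv x t = -(b t (x t)) / (t : ℂ) := fun t ht =>
        (hxode t ⟨ht₁l.trans ht.1, ht.2⟩).deriv
      exact ((measurable_deriv x).aestronglyMeasurable).congr
        ((ae_restrict_iff' measurableSet_Ioc).2 (Filter.Eventually.of_forall heq))
    refine hMint.mono' hmeas ?_
    refine (ae_restrict_iff' measurableSet_Ioc).2 (Filter.Eventually.of_forall ?_)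
    intro t ht
    exact hbound t ⟨ht.1.le, ht.2⟩
  -- the fundamental theorem of calculus
  have key : ∫ t in t₁..t₀, (-(b t (x t)) / (t : ℂ)) = x t₀ - x t₁ := by
    apply intervalIntegral.integral_eq_sub_of_hasDerivAt
    · intro t ht
      rw [uIcc_of_le ht₁r.le] at ht
      exact hxode t (hsub ht)
    · exact hg_int
  have hx1 : ‖x t₁‖ ≤ ‖ξ‖ + ‖∫ t in t₁..t₀, (-(b t (x t)) / (t : ℂ))‖ := by
    rw [key, hxinit]
    calc ‖x t₁‖ = ‖ξ - (ξ - x t₁)‖ := by ring_nf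
      _ ≤ ‖ξ‖ + ‖ξ - x t₁‖ := norm_sub_le _ _
  have hMint : IntegrableOn M (Ioc t₁ t₀) volume :=
    (intervalIntegrable_iff_integrableOn_Ioc_of_le ht₁r.le).1 hintM
  have h5 : ‖∫ t in t₁..t₀, (-(b t (x t)) / (t : ℂ))‖ ≤ ∫ t in t₁..t₀, M t :=
    calc ‖∫ t in t₁..t₀, (-(b t (x t)) / (t : ℂ))‖
        ≤ ∫ t in t₁..t₀, ‖-(b t (x t)) / (t : ℂ)‖ :=
          intervalIntegral.norm_integral_le_integral_norm ht₁r.le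
      _ ≤ ∫ t in t₁..t₀, M t :=
          intervalIntegral.integral_mono_on ht₁r.le hg_int.norm hintM hbound
  have hsplit : ∫ t in t₁..t₀, M t =
      (∫ t in t₁..t₀, f₀ t) + ((∫ t in t₁..t₀, f₁ t) + (∫ t in t₁..t₀, f₂ t)) := by
    simp only [hM]
    rw [intervalIntegral.integral_add hint₀ (hint₁.add hint₂),
      intervalIntegral.integral_add hint₁ hint₂]
  have hphi : ∫ t in t₁..t₀, μ t / t = phi μ t₀ - phi μ t₁ := by
    rw [intervalIntegral.integral_of_le ht₁r.le]
    have hsp : phi μ t₀ = phi μ t₁ + ∫ t in Ioc t₁ t₀, μ t / t := by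
      unfold phi
      rw [← Set.Ioc_union_Ioc_eq_Ioc ht₁0.le ht₁r.le,
        setIntegral_union (Set.Ioc_disjoint_Ioc_of_le le_rfl) measurableSet_Ioc
          (hμint.mono_set (Ioc_subset_Ioc le_rfl (ht₁r.le.trans ht₀σ)))
          (hμint.mono_set (Ioc_subset_Ioc ht₁0.le ht₀σ))]
    linarith
  have hI0 : ∫ t in t₁..t₀, f₀ t = B₀ * (phi μ t₀ - phi μ t₁) := by
    simp only [hf₀]
    rw [intervalIntegral.integral_const_mul, hphi]
  have hI1' : ∫ t in t₁..t₀, f₁ t ≤ (B₁ * Cw + B₂ * Cq) * (1 / a) := by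
    simp only [hf₁]
    rw [intervalIntegral.integral_const_mul]
    have h0 : (0:ℝ) ≤ B₁ * Cw + B₂ * Cq := by positivity
    exact mul_le_mul_of_nonneg_left (I1 ha ht₁0 ht₁r.le) h0
  have hI2' : ∫ t in t₁..t₀, f₂ t ≤ (B₂ * Γ * Cw) * (1 / a ^ 2) := by
    simp only [hf₂]
    rw [intervalIntegral.integral_const_mul]
    have h0 : (0:ℝ) ≤ B₂ * Γ * Cw := by positivity
    exact mul_le_mul_of_nonneg_left (I2 ha ht₁0 ht₁r.le) h0
  have hfin : (B₁ * Cw + B₂ * Cq) * (1 / a) + (B₂ * Γ * Cw) * (1 / a ^ 2)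
      = (B₁ / a + B₂ * Γ / a ^ 2) * Cw + (B₂ / a) * Cq := by ring
  linarith
end
end

section
/- In the setting where σ > 0 and R > 0 are chosen so that A + L < a and B₀φ(σ) + (B₁/a + B₂Γ/a²)r₁ + (B₂/a)r₂ < R/2 (with r₁ = sup|w|, r₂ = sup|q| over (0,σ) × D_R), consider the characteristic ODE t dx/dt = −b(t,x), x(t₀) = ξ with b ∈ 𝒳₀((0,σ) × D_R), t₀ ∈ (0,σ), and let (t_ξ, t₀] be the maximal interval of existence of the solution x(t) with values in D_R. If ξ ∈ D_{R/2}, then t_ξ = 0; that is, the characteristic curve extends backward to t = 0. -/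
open Set MeasureTheory Complex

noncomputable section

structure IsPicardLindelofOld {E : Type*} [NormedAddCommGroup E] (v : ℝ → E → E)
    (tMin t₀ tMax : ℝ) (x₀ : E) (L : NNReal) (R C : ℝ) : Prop where
  ht₀ : t₀ ∈ Icc tMin tMax
  hR : 0 ≤ R
  lipschitz : ∀ t ∈ Icc tMin tMax, LipschitzOnWith L (v t) (Metric.closedBall x₀ R)
  cont : ∀ x ∈ Metric.closedBall x₀ R, ContinuousOn (fun t : ℝ => v t x) (Icc tMin tMax)
  norm_le : ∀ t ∈ Icc tMin tMax, ∀ x ∈ Metric.closedBall x₀ R, ‖v t x‖ ≤ C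
  C_mul_le : C * max (tMax - t₀) (t₀ - tMin) ≤ R

theorem picard_mem {E : Type*} [NormedAddCommGroup E] [NormedSpace ℝ E] [CompleteSpace E]
    {v : ℝ → E → E} {tMin t₀ tMax : ℝ} (x₀ : E) {C R : ℝ} {L : NNReal}
    (hpl : IsPicardLindelofOld v tMin t₀ tMax x₀ L R C) :
    ∃ f : ℝ → E, f t₀ = x₀ ∧ ∀ t ∈ Icc tMin tMax,
      f t ∈ Metric.closedBall x₀ R ∧ HasDerivWithinAt f (v t (f t)) (Icc tMin tMax) t := by
  have hC : 0 ≤ C := (norm_nonneg _).trans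
    (hpl.norm_le t₀ hpl.ht₀ x₀ (Metric.mem_closedBall_self hpl.hR))
  lift C to NNReal using hC
  lift R to NNReal using hpl.hR
  have hf : IsPicardLindelof v (tmin := tMin) (tmax := tMax) ⟨t₀, hpl.ht₀⟩ x₀ R 0 C L :=
    { lipschitzOnWith := hpl.lipschitz
      continuousOn := hpl.cont
      norm_le := hpl.norm_le
      mul_max_le := by
        have := hpl.C_mul_le
        simpa using this }
  obtain ⟨α, hα⟩ := ODE.FunSpace.exists_isFixedPt_next hf (Metric.mem_closedBall_self le_rfl)
  refine ⟨α.compProj, ?_, fun t ht => ⟨α.compProj_mem_closedBall hf.mul_max_le, ?_⟩⟩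
  · have := ODE.FunSpace.compProj_val (α := α) (t := ⟨t₀, hpl.ht₀⟩)
    rw [this, ← hα, ODE.FunSpace.next_apply₀]
  · apply ODE.hasDerivWithinAt_picard_Icc hpl.ht₀ hf.continuousOn_uncurry
      α.continuous_compProj.continuousOn
      (fun _ ht' ↦ α.compProj_mem_closedBall hf.mul_max_le) x₀ ht |>.congr_of_mem _ ht
    intro t' ht'
    nth_rw 1 [← hα]
    rw [ODE.FunSpace.compProj_of_mem ht', ODE.FunSpace.next_apply]

set_option maxHeartbeats 2000000 in
/-- Corollary 2.9 : if `ξ ∈ D_{R/2}` then the maximal characteristic curve through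
`(t₀, ξ)` extends backwards to `t = 0`, i.e. `t_ξ = 0`.  Here `σ, R` are chosen so that
`B₀φ(σ) + (B₁/a + B₂Γ/a²) r₁ + (B₂/a) r₂ < R/2`, where `r₁, r₂` bound `|w|, |q|`
on `(0,σ) × D_R`, and along the curve the decay estimates of Lemma 2.7 hold. -/
theorem characteristic_exists_down_to_zero
    (σ R : ℝ) (hσ : 0 < σ) (hR : 0 < R)
    (μ : ℝ → ℝ) (hμ : IsWeight σ μ)
    (B₀ B₁ B₂ : ℝ) (hB₀ : 0 < B₀) (hB₁ : 0 < B₁) (hB₂ : 0 < B₂)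
    (a : ℝ) (ha : 0 < a) (Γ : ℝ) (hΓ : 0 ≤ Γ)
    (b : ℝ → ℂ → ℂ)
    -- `b ∈ 𝒳₀((0,σ) × D_R)`
    (hbX : ContinuousOn (fun p : ℝ × ℂ => b p.1 p.2) (Set.Ioo 0 σ ×ˢ Disc R) ∧
      ∀ t ∈ Set.Ioo (0:ℝ) σ, DifferentiableOn ℂ (b t) (Disc R))
    (w q : ℝ → ℂ → ℂ) (r₁ r₂ : ℝ)
    (hr₁ : ∀ t ∈ Set.Ioo (0:ℝ) σ, ∀ z ∈ Disc R, ‖w t z‖ ≤ r₁)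
    (hr₂ : ∀ t ∈ Set.Ioo (0:ℝ) σ, ∀ z ∈ Disc R, ‖q t z‖ ≤ r₂)
    (hbbd : ∀ t ∈ Set.Ioo (0:ℝ) σ, ∀ z ∈ Disc R,
      ‖b t z‖ ≤ B₀ * μ t + B₁ * ‖w t z‖ + B₂ * ‖q t z‖)
    -- the smallness condition of Lemma 2.6
    (hsmall : B₀ * phi μ σ + (B₁ / a + B₂ * Γ / a ^ 2) * r₁ + (B₂ / a) * r₂ < R / 2)
    -- the characteristic curve on its maximal interval of existence `(t_ξ, t₀]`
    (t₀ : ℝ) (ht₀ : t₀ ∈ Set.Ioo 0 σ) (ξ : ℂ) (hξ : ξ ∈ Disc (R / 2))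
    (tξ : ℝ) (htξ : 0 ≤ tξ) (htξt₀ : tξ < t₀)
    (x : ℝ → ℂ)
    (hxsol : ∀ t ∈ Set.Ioc tξ t₀, x t ∈ Disc R ∧
      HasDerivAt x (-(b t (x t)) / (t : ℂ)) t)
    (hxinit : x t₀ = ξ)
    -- the decay estimates of Lemma 2.7 along the curve
    (hdecay : ∀ t₁ τ : ℝ, tξ < t₁ → t₁ < τ → τ ≤ t₀ →
      ‖w τ (x τ)‖ ≤ (t₁ / τ) ^ a * ‖w t₁ (x t₁)‖ ∧
      ‖q τ (x τ)‖ ≤ (t₁ / τ) ^ a *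
        (Γ * ‖w t₁ (x t₁)‖ * Real.log (τ / t₁) + ‖q t₁ (x t₁)‖))
    -- maximality : the solution cannot be extended below `t_ξ`
    (hmax : ∀ t' : ℝ, t' < tξ →
      ¬ ∃ y : ℝ → ℂ, (∀ t ∈ Set.Ioc t' t₀, y t ∈ Disc R ∧
          HasDerivAt y (-(b t (y t)) / (t : ℂ)) t) ∧
        ∀ t ∈ Set.Ioc tξ t₀, y t = x t) :
    tξ = 0 := by
  by_contra h0
  have htpos : 0 < tξ := htξ.lt_of_ne (Ne.symm h0)
  -- basic facts
  have hD : Disc R = Metric.ball (0:ℂ) R := by ext z; simp [Disc, mem_ball_zero_iff]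
  have hDopen : IsOpen (Disc R) := hD ▸ Metric.isOpen_ball
  obtain ⟨hμpos, hμcont, hμmono, hμint⟩ := hμ
  have hμle : ∀ t ∈ Ioo (0:ℝ) σ, μ t ≤ μ σ := fun t ht =>
    hμmono ⟨ht.1, ht.2.le⟩ ⟨hσ, le_rfl⟩ ht.2.le
  have h0D : (0:ℂ) ∈ Disc R := by simp [Disc, hR]
  have hr₁0 : 0 ≤ r₁ := le_trans (norm_nonneg _) (hr₁ t₀ ht₀ 0 h0D)
  have hr₂0 : 0 ≤ r₂ := le_trans (norm_nonneg _) (hr₂ t₀ ht₀ 0 h0D)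
  set M : ℝ := B₀ * μ σ + B₁ * r₁ + B₂ * r₂ with hMdef
  have hM0 : 0 < M := by
    have := hμpos σ ⟨hσ, le_rfl⟩
    have h1 : 0 ≤ B₁ * r₁ := mul_nonneg hB₁.le hr₁0
    have h2 : 0 ≤ B₂ * r₂ := mul_nonneg hB₂.le hr₂0
    nlinarith
  have hbM : ∀ t ∈ Ioo (0:ℝ) σ, ∀ z ∈ Disc R, ‖b t z‖ ≤ M := by
    intro t ht z hz
    have h1 := hbbd t ht z hz
    have h2 := hμle t ht
    have h3 := hr₁ t ht z hz
    have h4 := hr₂ t ht z hz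
    have := mul_le_mul_of_nonneg_left h2 hB₀.le
    have := mul_le_mul_of_nonneg_left h3 hB₁.le
    have := mul_le_mul_of_nonneg_left h4 hB₂.le
    rw [hMdef]; linarith
  have hIocsub : Ioc tξ t₀ ⊆ Ioo 0 σ := fun s hs =>
    ⟨htpos.trans hs.1, lt_of_le_of_lt hs.2 ht₀.2⟩
  set S : ℝ := B₀ * phi μ σ + (B₁ / a + B₂ * Γ / a ^ 2) * r₁ + (B₂ / a) * r₂ with hSdef
  -- THE MAIN INTEGRAL ESTIMATE (Lemma 2.6)
  have hxbound : ∀ t ∈ Ioc tξ t₀, ‖x t - ξ‖ ≤ S := by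
    intro t ht
    obtain ⟨htl, htr⟩ := ht
    have ht0 : 0 < t := htpos.trans htl
    have htσ : t < σ := lt_of_le_of_lt htr ht₀.2
    have hsub : Icc t t₀ ⊆ Ioc tξ t₀ := fun s hs => ⟨htl.trans_le hs.1, hs.2⟩
    have hsubσ : Icc t t₀ ⊆ Ioo 0 σ := fun s hs =>
      ⟨ht0.trans_le hs.1, lt_of_le_of_lt hs.2 ht₀.2⟩
    set g : ℝ → ℂ := fun s => -(b s (x s)) / (s:ℂ) with hgdef
    set c₁ : ℝ := B₁ * r₁ + B₂ * r₂ with hc₁def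
    set c₂ : ℝ := B₂ * Γ * r₁ with hc₂def
    have hc₁0 : 0 ≤ c₁ := by positivity
    have hc₂0 : 0 ≤ c₂ := by positivity
    set G₁ : ℝ → ℝ := fun s => μ s / s with hG₁def
    set G₂ : ℝ → ℝ := fun s => t ^ a * s ^ (-a-1) with hG₂def
    set G₃ : ℝ → ℝ := fun s => t ^ a * (s ^ (-a-1) * (Real.log s - Real.log t)) with hG₃def
    set G : ℝ → ℝ := fun s => B₀ * G₁ s + c₁ * G₂ s + c₂ * G₃ s with hGdef
    -- continuity facts
    have hxc : ContinuousOn x (Icc t t₀) := fun s hs =>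
      ((hxsol s (hsub hs)).2.continuousAt).continuousWithinAt
    have hbxc : ContinuousOn (fun s => b s (x s)) (Icc t t₀) := by
      apply hbX.1.comp (continuousOn_id.prodMk hxc)
      intro s hs
      exact ⟨hsubσ hs, (hxsol s (hsub hs)).1⟩
    have hgc : ContinuousOn g (Icc t t₀) := by
      apply (hbxc.neg).div (Complex.continuous_ofReal.continuousOn)
      intro s hs
      exact_mod_cast ne_of_gt (ht0.trans_le hs.1)
    have hG₁c : ContinuousOn G₁ (Icc t t₀) := by
      apply (hμcont.mono (fun s hs => ⟨ht0.trans_le hs.1, le_trans hs.2 ht₀.2.le⟩)).div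
        continuousOn_id
      intro s hs
      exact ne_of_gt (ht0.trans_le hs.1)
    have hrpowc : ContinuousOn (fun s : ℝ => s ^ (-a-1)) (Icc t t₀) := by
      apply ContinuousOn.rpow_const continuousOn_id
      intro s hs
      exact Or.inl (ne_of_gt (ht0.trans_le hs.1))
    have hG₂c : ContinuousOn G₂ (Icc t t₀) := continuousOn_const.mul hrpowc
    have hlogc : ContinuousOn (fun s : ℝ => Real.log s - Real.log t) (Icc t t₀) := by
      apply ContinuousOn.sub _ continuousOn_const
      apply ContinuousOn.log continuousOn_id
      intro s hs
      exact ne_of_gt (ht0.trans_le hs.1)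
    have hG₃c : ContinuousOn G₃ (Icc t t₀) := continuousOn_const.mul (hrpowc.mul hlogc)
    have hGc : ContinuousOn G (Icc t t₀) :=
      ((continuousOn_const.mul hG₁c).add (continuousOn_const.mul hG₂c)).add
        (continuousOn_const.mul hG₃c)
    -- FTC
    have hgd : ∀ s ∈ uIcc t t₀, HasDerivAt x (g s) s := by
      rw [uIcc_of_le htr]
      exact fun s hs => (hxsol s (hsub hs)).2
    have hgint : IntervalIntegrable g volume t t₀ := hgc.intervalIntegrable_of_Icc htr
    have hftc : ∫ s in t..t₀, g s = x t₀ - x t :=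
      intervalIntegral.integral_eq_sub_of_hasDerivAt hgd hgint
    -- pointwise bound
    have hptw : ∀ s ∈ Icc t t₀, ‖g s‖ ≤ G s := by
      intro s hs
      have hs0 : 0 < s := ht0.trans_le hs.1
      have hxs := hxsol s (hsub hs)
      have hsσ : s ∈ Ioo (0:ℝ) σ := hsubσ hs
      have htmem : t ∈ Ioo (0:ℝ) σ := ⟨ht0, htσ⟩
      have hxt := hxsol t ⟨htl, htr⟩
      have hw : ‖w s (x s)‖ ≤ (t/s) ^ a * r₁ := by
        rcases eq_or_lt_of_le hs.1 with heq | hlt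
        · subst heq
          rw [div_self (ne_of_gt ht0), Real.one_rpow, one_mul]
          exact hr₁ t htmem _ hxt.1
        · refine le_trans (hdecay t s htl hlt hs.2).1 ?_
          exact mul_le_mul_of_nonneg_left (hr₁ t htmem _ hxt.1)
            (Real.rpow_nonneg (div_nonneg ht0.le hs0.le) a)
      have hq : ‖q s (x s)‖ ≤ (t/s) ^ a * (Γ * r₁ * (Real.log s - Real.log t) + r₂) := by
        rcases eq_or_lt_of_le hs.1 with heq | hlt
        · subst heq
          rw [div_self (ne_of_gt ht0), Real.one_rpow, one_mul, sub_self, mul_zero, zero_add]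
          exact hr₂ t htmem _ hxt.1
        · refine le_trans (hdecay t s htl hlt hs.2).2 ?_
          apply mul_le_mul_of_nonneg_left _
            (Real.rpow_nonneg (div_nonneg ht0.le hs0.le) a)
          have hlog : Real.log (s/t) = Real.log s - Real.log t :=
            Real.log_div (ne_of_gt hs0) (ne_of_gt ht0)
          have hlog0 : 0 ≤ Real.log (s/t) :=
            Real.log_nonneg ((one_le_div ht0).mpr hlt.le)
          rw [hlog] at hlog0 ⊢
          have h1 : Γ * ‖w t (x t)‖ * (Real.log s - Real.log t) ≤
              Γ * r₁ * (Real.log s - Real.log t) := by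
            apply mul_le_mul_of_nonneg_right _ hlog0
            exact mul_le_mul_of_nonneg_left (hr₁ t htmem _ hxt.1) hΓ
          have h2 := hr₂ t htmem _ hxt.1
          linarith
      have hkey : ‖b s (x s)‖ ≤ B₀ * μ s + c₁ * (t/s)^a
          + c₂ * ((t/s)^a * (Real.log s - Real.log t)) := by
        have h0 := hbbd s hsσ (x s) hxs.1
        have h1 := mul_le_mul_of_nonneg_left hw hB₁.le
        have h2 := mul_le_mul_of_nonneg_left hq hB₂.le
        rw [hc₁def, hc₂def]
        nlinarith [Real.rpow_nonneg (div_nonneg ht0.le hs0.le) a]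
      have hgnorm : ‖g s‖ = ‖b s (x s)‖ / s := by
        rw [hgdef]
        simp only [norm_div, norm_neg]
        congr 1
        simp [Complex.norm_real, Real.norm_eq_abs, abs_of_pos hs0]
      have hid : (t/s)^a / s = t^a * s^(-a-1) := by
        rw [Real.div_rpow ht0.le hs0.le,
          show (-a-1 : ℝ) = -a + -1 by ring, Real.rpow_add hs0, Real.rpow_neg_one,
          Real.rpow_neg hs0.le]
        field_simp
      rw [hgnorm]
      calc ‖b s (x s)‖ / s
          ≤ (B₀ * μ s + c₁ * (t/s)^a + c₂ * ((t/s)^a * (Real.log s - Real.log t))) / s := by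
            exact (div_le_div_iff_of_pos_right hs0).mpr hkey
        _ = B₀ * G₁ s + c₁ * (G₂ s) + c₂ * (G₃ s) := by
            rw [hG₁def, hG₂def, hG₃def]
            simp only
            rw [show (B₀ * μ s + c₁ * (t/s)^a + c₂ * ((t/s)^a * (Real.log s - Real.log t))) / s
              = B₀ * (μ s / s) + c₁ * ((t/s)^a / s)
                + c₂ * (((t/s)^a / s) * (Real.log s - Real.log t)) by ring]
            rw [hid]
            ring
        _ = G s := rfl
    -- integrability
    have hG₁int : IntervalIntegrable G₁ volume t t₀ := hG₁c.intervalIntegrable_of_Icc htr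
    have hG₂int : IntervalIntegrable G₂ volume t t₀ := hG₂c.intervalIntegrable_of_Icc htr
    have hG₃int : IntervalIntegrable G₃ volume t t₀ := hG₃c.intervalIntegrable_of_Icc htr
    have hGint : IntervalIntegrable G volume t t₀ := hGc.intervalIntegrable_of_Icc htr
    have hgnint : IntervalIntegrable (fun s => ‖g s‖) volume t t₀ :=
      (hgc.norm).intervalIntegrable_of_Icc htr
    have hmono : ∫ s in t..t₀, ‖g s‖ ≤ ∫ s in t..t₀, G s :=
      intervalIntegral.integral_mono_on htr hgnint hGint hptw
    have hsplit : (∫ s in t..t₀, G s)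
        = B₀ * (∫ s in t..t₀, G₁ s) + c₁ * (∫ s in t..t₀, G₂ s)
          + c₂ * (∫ s in t..t₀, G₃ s) := by
      rw [hGdef]
      simp only
      rw [intervalIntegral.integral_add ((hG₁int.const_mul B₀).add (hG₂int.const_mul c₁))
        (hG₃int.const_mul c₂),
        intervalIntegral.integral_add (hG₁int.const_mul B₀) (hG₂int.const_mul c₁),
        intervalIntegral.integral_const_mul B₀ G₁, intervalIntegral.integral_const_mul c₁ G₂,
        intervalIntegral.integral_const_mul c₂ G₃]
    have hI₁ : (∫ s in t..t₀, G₁ s) ≤ phi μ σ := by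
      rw [intervalIntegral.integral_of_le htr]
      apply setIntegral_mono_set hμint
      · apply (ae_restrict_iff' measurableSet_Ioc).mpr
        exact ae_of_all _ fun s hs => div_nonneg (hμpos s hs).le hs.1.le
      · apply HasSubset.Subset.eventuallyLE
        intro s hs
        exact ⟨ht0.trans hs.1, le_trans hs.2 ht₀.2.le⟩
    have hI₂ : (∫ s in t..t₀, G₂ s) ≤ 1/a := by
      have hF : ∀ s ∈ uIcc t t₀,
          HasDerivAt (fun u : ℝ => t^a * (u^(-a) / (-a))) (G₂ s) s := by
        rw [uIcc_of_le htr]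
        intro s hs
        have hs0 : 0 < s := ht0.trans_le hs.1
        have h := Real.hasDerivAt_rpow_const (x := s) (p := -a) (Or.inl (ne_of_gt hs0))
        have h2 := (h.div_const (-a)).const_mul (t^a)
        convert h2 using 1
        · rfl
        · rfl
        rw [hG₂def]
        simp only
        field_simp <;> ring
      rw [intervalIntegral.integral_eq_sub_of_hasDerivAt hF hG₂int]
      have h1 : t^a * (t^(-a) / (-a)) = -(1/a) := by
        rw [show t^a * (t^(-a)/(-a)) = (t^a * t^(-a))/(-a) by ring,
          ← Real.rpow_add ht0, add_neg_cancel, Real.rpow_zero]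
        field_simp
      have hta : 0 < t^a := Real.rpow_pos_of_pos ht0 a
      have ht₀a : 0 < t₀^(-a) := Real.rpow_pos_of_pos ht₀.1 (-a)
      have h2 : t^a * (t₀^(-a) / (-a)) ≤ 0 := by
        have h3 : t₀^(-a)/(-a) ≤ 0 :=
          div_nonpos_of_nonneg_of_nonpos ht₀a.le (by linarith)
        exact mul_nonpos_iff.mpr (Or.inl ⟨hta.le, h3⟩)
      rw [h1]
      linarith
    have hI₃ : (∫ s in t..t₀, G₃ s) ≤ 1/a^2 := by
      have hF : ∀ s ∈ uIcc t t₀,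
          HasDerivAt (fun u : ℝ =>
            t^a * (-(u^(-a)) * (Real.log u - Real.log t)/a - u^(-a)/a^2)) (G₃ s) s := by
        rw [uIcc_of_le htr]
        intro s hs
        have hs0 : 0 < s := ht0.trans_le hs.1
        have h1 := Real.hasDerivAt_rpow_const (x := s) (p := -a) (Or.inl (ne_of_gt hs0))
        have hlog : HasDerivAt (fun u : ℝ => Real.log u - Real.log t) s⁻¹ s :=
          (Real.hasDerivAt_log (ne_of_gt hs0)).sub_const _
        have hm := (h1.neg.mul hlog)
        have h2 := ((hm.div_const a).sub (h1.div_const (a^2))).const_mul (t^a)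
        convert h2 using 1
        · rfl
        · rfl
        · rfl
        have hss : s^(-a) * s⁻¹ = s^(-a-1) := by
          rw [show (-a-1:ℝ) = -a + -1 by ring, Real.rpow_add hs0, Real.rpow_neg_one]
        rw [hG₃def]
        simp only [Pi.neg_apply]
        rw [← hss]
        field_simp <;> ring
      rw [intervalIntegral.integral_eq_sub_of_hasDerivAt hF hG₃int]
      have hta : 0 < t^a := Real.rpow_pos_of_pos ht0 a
      have ht₀a : 0 < t₀^(-a) := Real.rpow_pos_of_pos ht₀.1 (-a)
      have h1 : t^a * (-(t^(-a)) * (Real.log t - Real.log t)/a - t^(-a)/a^2)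
          = -(1/a^2) := by
        rw [sub_self, mul_zero, zero_div, zero_sub,
          show t^a * -(t^(-a)/a^2) = -((t^a * t^(-a))/a^2) by ring,
          ← Real.rpow_add ht0, add_neg_cancel, Real.rpow_zero]
      have hΔ : 0 ≤ Real.log t₀ - Real.log t :=
        sub_nonneg.mpr ((Real.log_le_log_iff ht0 ht₀.1).mpr htr)
      have h2 : t^a * (-(t₀^(-a)) * (Real.log t₀ - Real.log t)/a - t₀^(-a)/a^2) ≤ 0 := by
        have hx1 : -(t₀^(-a)) * (Real.log t₀ - Real.log t)/a ≤ 0 := by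
          apply div_nonpos_of_nonpos_of_nonneg _ ha.le
          exact mul_nonpos_of_nonpos_of_nonneg (by linarith) hΔ
        have hx2 : t₀^(-a)/a^2 ≥ 0 := by positivity
        have hx3 : -(t₀^(-a)) * (Real.log t₀ - Real.log t)/a - t₀^(-a)/a^2 ≤ 0 := by linarith
        exact mul_nonpos_iff.mpr (Or.inl ⟨hta.le, hx3⟩)
      rw [h1]
      linarith
    have hnorm : ‖x t - ξ‖ ≤ ∫ s in t..t₀, ‖g s‖ := by
      calc ‖x t - ξ‖ = ‖x t₀ - x t‖ := by rw [hxinit, norm_sub_rev]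
        _ = ‖∫ s in t..t₀, g s‖ := by rw [hftc]
        _ ≤ ∫ s in t..t₀, ‖g s‖ := intervalIntegral.norm_integral_le_integral_norm htr
    calc ‖x t - ξ‖ ≤ ∫ s in t..t₀, G s := le_trans hnorm hmono
      _ = B₀ * (∫ s in t..t₀, G₁ s) + c₁ * (∫ s in t..t₀, G₂ s)
          + c₂ * (∫ s in t..t₀, G₃ s) := hsplit
      _ ≤ B₀ * phi μ σ + c₁ * (1/a) + c₂ * (1/a^2) :=
          add_le_add (add_le_add (mul_le_mul_of_nonneg_left hI₁ hB₀.le)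
            (mul_le_mul_of_nonneg_left hI₂ hc₁0)) (mul_le_mul_of_nonneg_left hI₃ hc₂0)
      _ = B₀ * phi μ σ + (B₁ / a + B₂ * Γ / a ^ 2) * r₁ + (B₂ / a) * r₂ := by
          rw [hc₁def, hc₂def]
          field_simp
          ring

      _ = S := hSdef.symm

  set ρ : ℝ := ‖ξ‖ + S with hρdef
  have hxρ : ∀ t ∈ Ioc tξ t₀, ‖x t‖ ≤ ρ := by
    intro t ht
    have h1 := hxbound t ht
    have : ‖x t‖ ≤ ‖x t - ξ‖ + ‖ξ‖ := by
      simpa using norm_add_le (x t - ξ) ξ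
    rw [hρdef]; linarith
  have hξ2 : ‖ξ‖ < R / 2 := hξ
  have hρR : ρ < R := by rw [hρdef]; rw [hSdef]; linarith
  -- Lipschitz bound on x, existence of the limit ℓ at tξ
  set K : ℝ := M / tξ with hKdef
  have hK0 : 0 ≤ K := le_of_lt (div_pos hM0 htpos)
  have hxlip : LipschitzOnWith ⟨K, hK0⟩ x (Ioc tξ t₀) := by
    apply (convex_Ioc tξ t₀).lipschitzOnWith_of_nnnorm_hasDerivWithin_le
      (f' := fun s => -(b s (x s)) / (s : ℂ))
      (fun s hs => ((hxsol s hs).2).hasDerivWithinAt)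
    intro s hs
    have hs0 : 0 < s := htpos.trans hs.1
    have hb := hbM s (hIocsub hs) (x s) (hxsol s hs).1
    have : ‖-(b s (x s)) / (s:ℂ)‖ ≤ K := by
      rw [norm_div, norm_neg]
      simp only [Complex.norm_real, Real.norm_eq_abs, abs_of_pos hs0]
      exact div_le_div₀ hM0.le hb htpos hs.1.le
    exact NNReal.coe_le_coe.mp (by rw [coe_nnnorm]; exact this)
  have hex : ∃ ℓ : ℂ, Filter.Tendsto x (nhdsWithin tξ (Ioi tξ)) (nhds ℓ) := by
    have hKpos : 0 < K := div_pos hM0 htpos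
    have hC : Cauchy (Filter.map x (nhdsWithin tξ (Ioi tξ))) := by
      rw [Metric.cauchy_iff]
      constructor
      · exact Filter.map_neBot
      · intro ε hε
        set δ : ℝ := min (ε / (2 * (K + 1))) (t₀ - tξ) with hδdef
        have hδ0 : 0 < δ := lt_min (by positivity) (by linarith)
        refine ⟨x '' Ioc tξ (tξ + δ), Filter.image_mem_map ?_, ?_⟩
        · exact Ioc_mem_nhdsGT_of_mem ⟨le_rfl, by linarith⟩
        · rintro _ ⟨u, hu, rfl⟩ _ ⟨v, hv, rfl⟩
          have hsub : Ioc tξ (tξ + δ) ⊆ Ioc tξ t₀ := by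
            apply Ioc_subset_Ioc_right
            have := min_le_right (ε / (2 * (K + 1))) (t₀ - tξ)
            rw [hδdef]; linarith
          have h1 := hxlip.dist_le_mul u (hsub hu) v (hsub hv)
          have h2 : dist u v ≤ δ := by
            rw [Real.dist_eq, abs_le]
            constructor <;> [skip; skip] <;>
              · rcases hu with ⟨hu1, hu2⟩; rcases hv with ⟨hv1, hv2⟩; linarith
          have hKδ : K * δ < ε := by
            have hδle : δ ≤ ε / (2 * (K + 1)) := min_le_left _ _
            have : K * δ ≤ K * (ε / (2 * (K + 1))) :=
              mul_le_mul_of_nonneg_left hδle hKpos.le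
            have h3 : K * (ε / (2 * (K + 1))) < ε := by
              rw [div_eq_mul_inv]
              rw [show K * (ε * (2 * (K + 1))⁻¹) = ε * (K / (2 * (K + 1))) by ring]
              have : K / (2 * (K + 1)) < 1 := by
                rw [div_lt_one (by positivity)]; linarith
              nlinarith
            linarith
          calc dist (x u) (x v) ≤ (⟨K, hK0⟩ : NNReal) * dist u v := h1
            _ ≤ K * δ := by
                have : ((⟨K, hK0⟩ : NNReal) : ℝ) = K := rfl
                rw [this]
                exact mul_le_mul_of_nonneg_left h2 hKpos.le
            _ < ε := hKδ
    obtain ⟨ℓ, hℓ⟩ := CompleteSpace.complete hC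
    exact ⟨ℓ, hℓ⟩

  obtain ⟨ℓ, hxℓ⟩ := hex
  have hℓρ : ‖ℓ‖ ≤ ρ := by
    apply le_of_tendsto hxℓ.norm
    filter_upwards [Ioc_mem_nhdsGT_of_mem ⟨le_rfl, htξt₀⟩] with s hs
    exact hxρ s hs
  have hℓR : ℓ ∈ Disc R := lt_of_le_of_lt hℓρ hρR
  -- Picard–Lindelöf setup
  set r : ℝ := (R - ρ) / 5 with hrdef
  have hr0 : 0 < r := by rw [hrdef]; linarith
  have hcball : Metric.closedBall ℓ r ⊆ Disc R := by
    intro z hz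
    rw [Metric.mem_closedBall, dist_eq_norm] at hz
    have : ‖z‖ ≤ ‖z - ℓ‖ + ‖ℓ‖ := by simpa using norm_add_le (z - ℓ) ℓ
    show ‖z‖ < R
    rw [hrdef] at hz; linarith
  have hball3 : ∀ z ∈ Metric.closedBall ℓ r, Metric.ball z (3*r) ⊆ Disc R := by
    intro z hz u hu
    rw [Metric.mem_closedBall, dist_eq_norm] at hz
    rw [Metric.mem_ball, dist_eq_norm] at hu
    have h1 : ‖u‖ ≤ ‖u - z‖ + ‖z - ℓ‖ + ‖ℓ‖ := by
      calc ‖u‖ = ‖(u - z) + (z - ℓ) + ℓ‖ := by ring_nf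
        _ ≤ ‖(u - z) + (z - ℓ)‖ + ‖ℓ‖ := norm_add_le _ _
        _ ≤ ‖u - z‖ + ‖z - ℓ‖ + ‖ℓ‖ := by
            have := norm_add_le (u - z) (z - ℓ); linarith
    show ‖u‖ < R
    rw [hrdef] at hz hu; linarith
  -- Lipschitz constant for b in the space variable
  set K₀ : ℝ := (2*M + 1) / (3*r) with hK₀def
  have hK₀0 : 0 < K₀ := by positivity
  have hblip : ∀ t ∈ Ioo (0:ℝ) σ, ∀ z ∈ Metric.closedBall ℓ r, ∀ u ∈ Metric.closedBall ℓ r,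
      dist (b t z) (b t u) ≤ K₀ * dist z u := by
    intro t ht z hz u hu
    have hd : DifferentiableOn ℂ (b t) (Metric.ball z (3*r)) :=
      (hbX.2 t ht).mono (hball3 z hz)
    have hmaps : MapsTo (b t) (Metric.ball z (3*r)) (Metric.ball (b t z) (2*M+1)) := by
      intro u hu
      rw [Metric.mem_ball]
      calc dist (b t u) (b t z) ≤ ‖b t u‖ + ‖b t z‖ := dist_le_norm_add_norm _ _
        _ ≤ M + M := add_le_add (hbM t ht u (hball3 z hz hu))
              (hbM t ht z (hcball hz))
        _ < 2*M + 1 := by linarith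
    have huz : u ∈ Metric.ball z (3*r) := by
      rw [Metric.mem_ball]
      calc dist u z ≤ dist u ℓ + dist ℓ z := dist_triangle _ _ _
        _ ≤ r + r := add_le_add hu (by rw [dist_comm]; exact Metric.mem_closedBall.mp hz)
        _ < 3*r := by linarith
    have := Complex.dist_le_div_mul_dist_of_mapsTo_ball hd (hmaps.mono_right Metric.ball_subset_closedBall) huz
    rw [dist_comm (b t z), dist_comm z]
    rw [hK₀def]
    exact this
  -- choose ε
  set C₀ : ℝ := 2*M/tξ with hC₀def
  have hC₀0 : 0 < C₀ := by positivity
  set ε : ℝ := min (tξ/2) (min ((σ - tξ)/2) (r / C₀)) with hεdef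
  have hε0 : 0 < ε := by
    apply lt_min (by linarith)
    apply lt_min
    · have : tξ < σ := htξt₀.trans ht₀.2
      linarith
    · positivity
  have hεtξ : ε ≤ tξ/2 := min_le_left _ _
  have hεσ : ε ≤ (σ - tξ)/2 := le_trans (min_le_right _ _) (min_le_left _ _)
  have hεr : ε ≤ r / C₀ := le_trans (min_le_right _ _) (min_le_right _ _)
  set tmin : ℝ := tξ - ε with htmindef
  set tmax : ℝ := tξ + ε with htmaxdef
  have htmin0 : 0 < tmin := by rw [htmindef]; linarith
  have hIccsub : Icc tmin tmax ⊆ Ioo 0 σ := by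
    intro s hs
    rcases hs with ⟨h1, h2⟩
    constructor
    · rw [htmindef] at h1; linarith
    · rw [htmaxdef] at h2
      have : tξ < σ := htξt₀.trans ht₀.2
      linarith
  -- the Picard-Lindelöf data
  set v : ℝ → ℂ → ℂ := fun t z => -(b t z) / (t : ℂ) with hvdef
  set L : NNReal := Real.toNNReal (K₀ * (2 / tξ)) with hLdef
  have hpl : IsPicardLindelofOld v tmin tξ tmax ℓ L r C₀ := by
    constructor
    · exact ⟨by rw [htmindef]; linarith, by rw [htmaxdef]; linarith⟩
    · exact hr0.le
    · -- lipschitz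
      intro t ht
      apply LipschitzOnWith.of_dist_le_mul
      intro z hz u hu
      have htσ : t ∈ Ioo (0:ℝ) σ := hIccsub ht
      have ht2 : tξ/2 ≤ t := by
        have := ht.1; rw [htmindef] at this; linarith
      have hdist : dist (v t z) (v t u) = dist (b t z) (b t u) / t := by
        rw [hvdef]
        simp only [dist_eq_norm]
        rw [show -(b t z) / (t:ℂ) - -(b t u) / (t:ℂ) = -((b t z - b t u) / (t:ℂ)) by ring]
        rw [norm_neg, norm_div]
        simp [Complex.norm_real, Real.norm_eq_abs, abs_of_pos htσ.1]
      rw [hdist]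
      have h1 := hblip t htσ z hz u hu
      have h2 : dist (b t z) (b t u) / t ≤ (K₀ * dist z u) / (tξ/2) := by
        apply div_le_div₀ (by positivity) h1 (by linarith) ht2
      have h3 : (K₀ * dist z u) / (tξ/2) = (K₀ * (2/tξ)) * dist z u := by
        field_simp
      have h4 : ((L : NNReal) : ℝ) = K₀ * (2/tξ) := by
        rw [hLdef, Real.coe_toNNReal]
        positivity
      rw [h4]
      linarith
    · -- continuity in t
      intro z hz
      have hzD : z ∈ Disc R := hcball hz
      have h1 : ContinuousOn (fun t : ℝ => b t z) (Icc tmin tmax) := by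
        apply hbX.1.comp (continuous_id.prodMk continuous_const).continuousOn
        intro s hs
        exact ⟨hIccsub hs, hzD⟩
      apply (h1.neg).div (Complex.continuous_ofReal.continuousOn)
      intro s hs
      exact_mod_cast ne_of_gt (hIccsub hs).1
    · -- norm bound
      intro t ht z hz
      have htσ : t ∈ Ioo (0:ℝ) σ := hIccsub ht
      have ht2 : tξ/2 ≤ t := by
        have := ht.1; rw [htmindef] at this; linarith
      have h1 := hbM t htσ z (hcball hz)
      rw [hvdef]
      simp only
      rw [norm_div, norm_neg]
      simp only [Complex.norm_real, Real.norm_eq_abs, abs_of_pos htσ.1]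
      calc ‖b t z‖ / t ≤ M / (tξ/2) := div_le_div₀ hM0.le h1 (by linarith) ht2
        _ = C₀ := by rw [hC₀def]; field_simp
    · -- C * max ≤ r
      have : max (tmax - tξ) (tξ - tmin) = ε := by
        rw [htmaxdef, htmindef]; simp
      rw [this]
      calc C₀ * ε ≤ C₀ * (r / C₀) := mul_le_mul_of_nonneg_left hεr hC₀0.le
        _ = r := by field_simp
  obtain ⟨f, hf0, hf⟩ := picard_mem ℓ hpl
  -- glue
  set y : ℝ → ℂ := fun t => if t ≤ tξ then f t else x t with hydef
  have hyx : ∀ t ∈ Ioc tξ t₀, y t = x t := fun t ht => if_neg (not_le.mpr ht.1)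
  have hyf : ∀ t ≤ tξ, y t = f t := fun t ht => if_pos ht
  have hytξ : y tξ = ℓ := by rw [hyf tξ le_rfl, hf0]
  set e : ℂ := -(b tξ ℓ) / (tξ : ℂ) with hedef
  have hℓmem : (tξ, ℓ) ∈ Ioo (0:ℝ) σ ×ˢ Disc R :=
    ⟨⟨htpos, htξt₀.trans ht₀.2⟩, hℓR⟩
  have hIci : HasDerivWithinAt y e (Ici tξ) tξ := by
    apply hasDerivWithinAt_Ici_of_tendsto_deriv (s := Ioo tξ t₀)
    · -- differentiability of y on Ioo tξ t₀
      intro u hu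
      have hx' := (hxsol u ⟨hu.1, hu.2.le⟩).2
      have hyeq : y =ᶠ[nhds u] x := by
        filter_upwards [Ioi_mem_nhds hu.1] with v hv
        exact if_neg (not_le.mpr hv)
      exact ((hx'.congr_of_eventuallyEq hyeq).differentiableAt).differentiableWithinAt
    · -- continuity within at tξ
      have h1 : Filter.Tendsto y (nhdsWithin tξ (Ioo tξ t₀)) (nhds ℓ) := by
        apply Filter.Tendsto.congr' _ (hxℓ.mono_left (nhdsWithin_mono tξ Ioo_subset_Ioi_self))
        filter_upwards [self_mem_nhdsWithin] with v hv
        exact (if_neg (not_le.mpr hv.1)).symm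
      rw [ContinuousWithinAt, hytξ]
      exact h1
    · exact Ioo_mem_nhdsGT htξt₀
    · -- convergence of the derivative
      have hb0 : Filter.Tendsto (fun u => -(b u (x u)) / (u : ℂ))
          (nhdsWithin tξ (Ioi tξ)) (nhds e) := by
        have h1 : Filter.Tendsto (fun u : ℝ => ((u : ℝ), x u))
            (nhdsWithin tξ (Ioi tξ)) (nhds (tξ, ℓ)) :=
          (Filter.tendsto_id.mono_left nhdsWithin_le_nhds).prodMk_nhds hxℓ
        have h2 : ContinuousAt (fun p : ℝ × ℂ => b p.1 p.2) (tξ, ℓ) :=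
          hbX.1.continuousAt ((isOpen_Ioo.prod hDopen).mem_nhds hℓmem)
        have h3 := (h2.tendsto.comp h1).neg
        have h4 : Filter.Tendsto (fun u : ℝ => (u : ℂ)) (nhdsWithin tξ (Ioi tξ))
            (nhds (tξ : ℂ)) :=
          (Complex.continuous_ofReal.tendsto tξ).comp (Filter.tendsto_id.mono_left nhdsWithin_le_nhds)
        exact h3.div h4 (by exact_mod_cast ne_of_gt htpos)
      apply hb0.congr'
      filter_upwards [Ioo_mem_nhdsGT htξt₀] with u hu
      have hx' := (hxsol u ⟨hu.1, hu.2.le⟩).2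
      have hyeq : y =ᶠ[nhds u] x := by
        filter_upwards [Ioi_mem_nhds hu.1] with v hv
        exact if_neg (not_le.mpr hv)
      rw [hyeq.deriv_eq, hx'.deriv]
  have hIic : HasDerivWithinAt y e (Iic tξ) tξ := by
    have hfd := (hf tξ ⟨by rw [htmindef]; linarith, by rw [htmaxdef]; linarith⟩).2
    have hfd2 : HasDerivWithinAt f e (Icc tmin tmax) tξ := by
      rw [hedef, ← hf0]; exact hfd
    have hmem : Icc tmin tmax ∈ nhdsWithin tξ (Iic tξ) :=
      Filter.mem_of_superset (Icc_mem_nhdsLE_of_mem ⟨by rw [htmindef]; linarith, le_rfl⟩)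
        (Icc_subset_Icc_right (by rw [htmaxdef]; linarith))
    exact ((hfd2.mono_of_mem_nhdsWithin hmem).congr (fun u hu => hyf u hu)
      (by rw [hytξ, hf0]))
  have hat : HasDerivAt y e tξ := by
    have := hIic.union hIci
    rw [Iic_union_Ici] at this
    exact hasDerivWithinAt_univ.mp this
  -- the extension contradicts maximality
  apply hmax (tξ - ε/2) (by linarith)
  refine ⟨y, fun t ht => ?_, hyx⟩
  rcases le_or_gt t tξ with hle | hlt
  · have htIcc : t ∈ Icc tmin tmax := by
      constructor
      · rw [htmindef]; have := ht.1; linarith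
      · rw [htmaxdef]; linarith
    obtain ⟨hmemf, hfd⟩ := hf t htIcc
    constructor
    · rw [hyf t hle]; exact hcball hmemf
    · rcases eq_or_lt_of_le hle with heq | hlt2
      · subst heq
        rw [hytξ]
        exact hat
      · have hfd2 : HasDerivAt f (v t (f t)) t :=
          hfd.hasDerivAt (Icc_mem_nhds (by rw [htmindef]; have := ht.1; linarith)
            (by rw [htmaxdef]; linarith))
        have hyeq : y =ᶠ[nhds t] f := by
          filter_upwards [Iio_mem_nhds hlt2] with v hv
          exact if_pos hv.le
        have := hfd2.congr_of_eventuallyEq hyeq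
        rw [hyf t hle]
        exact this
  · obtain ⟨hmemx, hxd⟩ := hxsol t ⟨hlt, ht.2⟩
    have hyt : y t = x t := if_neg (not_le.mpr hlt)
    constructor
    · rw [hyt]; exact hmemx
    · have hyeq : y =ᶠ[nhds t] x := by
        filter_upwards [Ioi_mem_nhds hlt] with v hv
        exact if_neg (not_le.mpr hv)
      have := hxd.congr_of_eventuallyEq hyeq
      rw [hyt]
      exact this
end
end

section
/- Let f be a holomorphic function on the sector S(θ,R) = {x ∈ ℂ : 0 < |x| < R, |arg x| < θ}. If sup_{S(ηθ, ηR)} |f(x)| = o(η^m) as η → +0 for some m ≥ 1, then sup_{S(ηθ, ηR)} |x f'(x)| = o(η^{m−1}) as η → +0. -/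
open Set Complex

noncomputable section

/-- The sector `S(θ,R) = {x ∈ ℂ : 0 < |x| < R, |arg x| < θ}`. -/
def Sect (θ R : ℝ) : Set ℂ := {x : ℂ | x ≠ 0 ∧ ‖x‖ < R ∧ |Complex.arg x| < θ}

open Real in
lemma arg_small_of_near_one {w : ℂ} {s : ℝ} (hs : 0 ≤ s) (hs2 : s ≤ 1/2)
    (hw : ‖w - 1‖ ≤ s) : w ≠ 0 ∧ |Complex.arg w| ≤ π * s := by
  have hnorm : (1:ℝ) - s ≤ ‖w‖ := by
    have h := abs_norm_sub_norm_le w 1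
    have h1 : ‖(1:ℂ)‖ = 1 := by simp
    rw [h1] at h
    have := (abs_le.mp (h.trans hw)).1
    linarith
  have hwpos : (0:ℝ) < ‖w‖ := by linarith
  have hw0 : w ≠ 0 := by
    intro h; rw [h] at hwpos; simp at hwpos
  have hre : 0 ≤ w.re := by
    have h := Complex.abs_re_le_norm (w - 1)
    have h2 : ‖w - 1‖ = ‖w - 1‖ := rfl
    have h3 : (w - 1).re = w.re - 1 := by simp
    rw [h2, h3] at h
    have := (abs_le.mp (h.trans hw)).1
    linarith
  have harg2 : |Complex.arg w| ≤ π / 2 := Complex.abs_arg_le_pi_div_two_iff.mpr hre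
  have him : |w.im| ≤ s := by
    have h := Complex.abs_im_le_norm (w - 1)
    have h2 : ‖w - 1‖ = ‖w - 1‖ := rfl
    have h3 : (w - 1).im = w.im := by simp
    rw [h2, h3] at h
    exact h.trans hw
  have hsin : Real.sin (Complex.arg w) = w.im / ‖w‖ := Complex.sin_arg w
  have hsinabs : Real.sin |Complex.arg w| = |Real.sin (Complex.arg w)| := by
    rcases le_or_gt 0 (Complex.arg w) with h | h
    · rw [_root_.abs_of_nonneg h, _root_.abs_of_nonneg]
      exact Real.sin_nonneg_of_nonneg_of_le_pi h (by linarith [Real.pi_pos,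
        (abs_le.mp harg2).2])
    · rw [_root_.abs_of_neg h, Real.sin_neg, _root_.abs_of_nonpos]
      exact Real.sin_nonpos_of_nonpos_of_neg_pi_le h.le
        (by linarith [Real.pi_pos, (abs_le.mp harg2).1])
  have hsinle : |Real.sin (Complex.arg w)| ≤ 2 * s := by
    rw [hsin, abs_div, abs_of_pos hwpos, div_le_iff₀ hwpos]
    nlinarith
  have hlb := Real.mul_le_sin (abs_nonneg (Complex.arg w)) harg2
  refine ⟨hw0, ?_⟩
  rw [hsinabs] at hlb
  have hpi := Real.pi_pos
  have : 2 / π * |Complex.arg w| ≤ 2 * s := hlb.trans hsinle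
  calc |Complex.arg w| = π / 2 * (2 / π * |Complex.arg w|) := by
        field_simp
    _ ≤ π / 2 * (2 * s) := by
        apply mul_le_mul_of_nonneg_left this (by positivity)
    _ = π * s := by ring

set_option maxHeartbeats 1000000 in
/-- Lemma 4.6 : if `f` is holomorphic on `S(θ,R)` and
`sup_{S(ηθ,ηR)} |f| = o(η^m)` as `η → +0` for some `m ≥ 1`, then
`sup_{S(ηθ,ηR)} |x f'(x)| = o(η^{m-1})` as `η → +0`. -/
theorem nagumo_sector_estimate
    (θ R : ℝ) (hθ : 0 < θ) (hR : 0 < R)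
    (f : ℂ → ℂ) (hf : DifferentiableOn ℂ f (Sect θ R))
    (m : ℝ) (hm : 1 ≤ m)
    (hsmall : ∀ ε > 0, ∃ η₀ > 0, ∀ η ∈ Set.Ioo (0:ℝ) η₀,
      ∀ x ∈ Sect (η * θ) (η * R), ‖f x‖ ≤ ε * η ^ m) :
    ∀ ε > 0, ∃ η₀ > 0, ∀ η ∈ Set.Ioo (0:ℝ) η₀,
      ∀ x ∈ Sect (η * θ) (η * R), ‖x * deriv f x‖ ≤ ε * η ^ (m - 1) := by
  intro ε hε
  have hpi := Real.pi_pos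
  have h2m : (0:ℝ) < (2:ℝ) ^ m := Real.rpow_pos_of_pos (by norm_num) m
  obtain ⟨ε', hε'def⟩ : ∃ e : ℝ, e = ε * θ / (2 * Real.pi * (2:ℝ) ^ m) := ⟨_, rfl⟩
  have hε' : 0 < ε' := by rw [hε'def]; positivity
  obtain ⟨η₁, hη₁, hbd⟩ := hsmall ε' hε'
  refine ⟨min (η₁ / 2) (min (1 / (2 * θ)) (1 / 2)), by positivity, ?_⟩
  rintro η ⟨hη0, hηlt⟩ x ⟨hx0, hxR, hxarg⟩
  have hη2 : 2 * η < η₁ := by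
    have := lt_of_lt_of_le hηlt (min_le_left _ _)
    linarith
  have hηθ : η * θ < 1 / 2 := by
    have := lt_of_lt_of_le hηlt ((min_le_right _ _).trans (min_le_left _ _))
    rw [lt_div_iff₀ (by positivity)] at this
    nlinarith
  have hηhalf : η < 1 / 2 := lt_of_lt_of_le hηlt
    ((min_le_right _ _).trans (min_le_right _ _))
  have hxpos : (0:ℝ) < ‖x‖ := norm_pos_iff.mpr hx0
  obtain ⟨s, hsdef⟩ : ∃ u : ℝ, u = η * θ / (2 * Real.pi) := ⟨_, rfl⟩
  have hspos : 0 < s := by rw [hsdef]; positivity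
  have hs2 : s ≤ 1 / 2 := by
    rw [hsdef, div_le_iff₀ (by positivity)]
    nlinarith [Real.pi_gt_three]
  obtain ⟨ρ, hρdef⟩ : ∃ u : ℝ, u = s * ‖x‖ := ⟨_, rfl⟩
  have hρpos : 0 < ρ := by rw [hρdef]; positivity
  -- the closed ball of radius ρ around x lies in the double sector
  have hball : Metric.closedBall x ρ ⊆ Sect (2 * η * θ) (2 * η * R) := by
    intro y hy
    rw [Metric.mem_closedBall, dist_eq_norm] at hy
    have hw : ‖y / x - 1‖ ≤ s := by
      rw [div_sub_one hx0, norm_div]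
      rw [div_le_iff₀ hxpos]
      exact hρdef ▸ hy
    obtain ⟨hw0, hwarg⟩ := arg_small_of_near_one hspos.le hs2 hw
    have hy0 : y ≠ 0 := by
      intro h
      apply hw0
      rw [h, zero_div]
    have hargw : |Complex.arg (y / x)| ≤ η * θ / 2 := by
      have : Real.pi * s = η * θ / 2 := by
        rw [hsdef]; field_simp
      rwa [this] at hwarg
    have hy_eq : y = x * (y / x) := by field_simp
    have hnormy : ‖y‖ < 2 * η * R := by
      have h1 : ‖y‖ ≤ ‖x‖ + ρ := by
        have := norm_sub_norm_le y x
        linarith [this.trans hy]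
      have : ρ ≤ ‖x‖ := by
        rw [hρdef]
        nlinarith
      nlinarith
    have hargsum : Complex.arg x + Complex.arg (y / x) ∈ Set.Ioc (-Real.pi) Real.pi := by
      constructor
      · have h1 := (abs_le.mp hargw).1
        have h2 := neg_lt_of_abs_lt hxarg
        nlinarith [Real.pi_gt_three]
      · have h1 := (abs_le.mp hargw).2
        have h2 := lt_of_abs_lt hxarg
        nlinarith [Real.pi_gt_three]
    have hargy : Complex.arg y = Complex.arg x + Complex.arg (y / x) := by
      conv_lhs => rw [hy_eq]
      exact Complex.arg_mul hx0 hw0 hargsum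
    refine ⟨hy0, hnormy, ?_⟩
    rw [hargy]
    calc |Complex.arg x + Complex.arg (y / x)| ≤ |Complex.arg x| + |Complex.arg (y / x)| :=
          abs_add_le _ _
      _ < η * θ + η * θ / 2 := by linarith [hxarg, hargw]
      _ < 2 * η * θ := by
          have h2 : 2 * η * θ = η * θ + η * θ := by ring
          rw [h2]; linarith [mul_pos hη0 hθ]
  have hsub : Metric.closedBall x ρ ⊆ Sect θ R := by
    refine hball.trans ?_
    rintro y ⟨h1, h2, h3⟩
    refine ⟨h1, ?_, ?_⟩
    · calc ‖y‖ < 2 * η * R := h2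
        _ ≤ R := by nlinarith
    · calc |Complex.arg y| < 2 * η * θ := h3
        _ ≤ θ := by nlinarith
  -- Cauchy estimate
  have hdc : DiffContOnCl ℂ f (Metric.ball x ρ) := by
    apply DifferentiableOn.diffContOnCl
    rw [closure_ball x hρpos.ne']
    exact hf.mono hsub
  have hC : ∀ z ∈ Metric.sphere x ρ, ‖f z‖ ≤ ε' * (2 * η) ^ m := by
    intro z hz
    have hz' : z ∈ Sect (2 * η * θ) ((2 * η) * R) := by
      have : z ∈ Metric.closedBall x ρ := Metric.sphere_subset_closedBall hz
      have h := hball this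
      rwa [show (2 : ℝ) * η * R = 2 * η * R by ring] at h
    exact hbd (2 * η) ⟨by linarith, hη2⟩ z hz'
  have hderiv : ‖deriv f x‖ ≤ ε' * (2 * η) ^ m / ρ :=
    Complex.norm_deriv_le_of_forall_mem_sphere_norm_le hρpos hdc hC
  -- put everything together
  have key : ‖x * deriv f x‖ ≤ ε' * (2 * η) ^ m / s := by
    rw [norm_mul]
    calc ‖x‖ * ‖deriv f x‖ ≤ ‖x‖ * (ε' * (2 * η) ^ m / ρ) := by
          apply mul_le_mul_of_nonneg_left hderiv hxpos.le
      _ = ε' * (2 * η) ^ m / s := by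
          have hx' : ‖x‖ ≠ 0 := by
            exact hxpos.ne'
          rw [hρdef]
          field_simp
  refine key.trans ?_
  have hrw : ε' * (2 * η) ^ m / s = ε * η ^ (m - 1) * (η ^ m / (η ^ (m-1) * η)) := by
    rw [Real.mul_rpow (by norm_num) hη0.le, hε'def, hsdef]
    field_simp
  have hpow : η ^ m / (η ^ (m-1) * η) = 1 := by
    have h1 : η ^ (m-1) * η = η ^ m := by
      nth_rewrite 2 [← Real.rpow_one η]
      rw [← Real.rpow_add hη0, sub_add_cancel]
    rw [h1, div_self (Real.rpow_pos_of_pos hη0 m).ne']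
  rw [hrw, hpow, mul_one]
end
end
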